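/- arXiv:2106.08750 — 5 statements merged into one kernel-verified Lean document; each statement's English description precedes it below -/
import Mathlib

section
/- Fix integers n, m, m' ≥ 1, matrices Φ_f ∈ ℝ^{n×m} and Φ_g ∈ ℝ^{n×m'}, vectors Ỹ ∈ ℝⁿ, θ₀ ∈ ℝᵐ, φ₀ ∈ ℝ^{m'}, and reals λ > 0, ν > 0, and let 𝓛 be the objective 𝓛(θ,φ) = θᵀΦ_fᵀΦ_g φ − ỸᵀΦ_g φ − ½ φᵀΦ_gᵀΦ_g φ − (ν/2)‖φ − φ₀‖² + (λ/2)‖θ − θ₀‖². Set L := Φ_g(Φ_gᵀΦ_g + νI_{m'})⁻¹Φ_gᵀ and θ* := (Φ_fᵀLΦ_f + λIₘ)⁻¹(Φ_fᵀLỸ − νΦ_fᵀΦ_g(Φ_gᵀΦ_g + νI_{m'})⁻¹φ₀ + λθ₀), and φ* := (Φ_gᵀΦ_g + νI_{m'})⁻¹(Φ_gᵀ(Φ_f θ* − Ỹ) + ν φ₀). Then (θ*, φ*) is the unique saddle point of 𝓛, i.e. 𝓛(θ*, φ) ≤ 𝓛(θ*, φ*) ≤ 𝓛(θ, φ*) for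 all θ ∈ ℝᵐ and φ ∈ ℝ^{m'}, and no other pair has this property; equivalently, θ* is the unique minimizer of the function θ ↦ max_{φ ∈ ℝ^{m'}} 𝓛(θ,φ). -/
open Matrix

section Aux
variable {a b : Type*} [Fintype a] [Fintype b]

lemma transp_dot (M : Matrix a b ℝ) (x : a → ℝ) (y : b → ℝ) :
    x ⬝ᵥ (M *ᵥ y) = (Mᵀ *ᵥ x) ⬝ᵥ y := by
  rw [Matrix.dotProduct_mulVec, Matrix.mulVec_transpose]

lemma dot_symm (A : Matrix a a ℝ) (hA : Aᵀ = A) (x y : a → ℝ) :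
    x ⬝ᵥ (A *ᵥ y) = y ⬝ᵥ (A *ᵥ x) := by
  rw [transp_dot, hA, dotProduct_comm]

lemma quad_max (A : Matrix a a ℝ) (hA : Aᵀ = A) (ψ φ : a → ℝ) :
    ((A *ᵥ ψ) ⬝ᵥ ψ - (1/2) * (ψ ⬝ᵥ (A *ᵥ ψ))) - ((A *ᵥ ψ) ⬝ᵥ φ - (1/2) * (φ ⬝ᵥ (A *ᵥ φ)))
      = (1/2) * ((ψ - φ) ⬝ᵥ (A *ᵥ (ψ - φ))) := by
  have h1 : φ ⬝ᵥ (A *ᵥ ψ) = ψ ⬝ᵥ (A *ᵥ φ) := dot_symm A hA φ ψ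
  have h2 : (A *ᵥ ψ) ⬝ᵥ ψ = ψ ⬝ᵥ (A *ᵥ ψ) := dotProduct_comm _ _
  have h3 : (A *ᵥ ψ) ⬝ᵥ φ = φ ⬝ᵥ (A *ᵥ ψ) := dotProduct_comm _ _
  simp only [Matrix.mulVec_sub, dotProduct_sub, sub_dotProduct, h1, h2, h3]
  ring

lemma quad_min (lam : ℝ) (hlam : lam ≠ 0) (d θ₀ θ : a → ℝ) :
    (d ⬝ᵥ θ + (lam/2) * ((θ - θ₀) ⬝ᵥ (θ - θ₀)))
      - (d ⬝ᵥ (θ₀ - lam⁻¹ • d) + (lam/2) * (((θ₀ - lam⁻¹ • d) - θ₀) ⬝ᵥ ((θ₀ - lam⁻¹ • d) - θ₀)))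
      = (lam/2) * ((θ - (θ₀ - lam⁻¹ • d)) ⬝ᵥ (θ - (θ₀ - lam⁻¹ • d))) := by
  have h1 : d ⬝ᵥ θ₀ = θ₀ ⬝ᵥ d := dotProduct_comm _ _
  have h2 : d ⬝ᵥ θ = θ ⬝ᵥ d := dotProduct_comm _ _
  simp only [dotProduct_sub, sub_dotProduct, dotProduct_smul,
    smul_dotProduct, smul_eq_mul, h1, h2]
  field_simp
  ring

lemma dot_self_nonneg (v : a → ℝ) : 0 ≤ v ⬝ᵥ v :=
  Finset.sum_nonneg fun _ _ => mul_self_nonneg _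

end Aux

/-- `(θ*, φ*)` is the unique saddle point of the randomized-prior minimax objective `𝓛`. -/
theorem stmt6 (n m m' : ℕ) (hn : 0 < n) (hm : 0 < m) (hm' : 0 < m')
    (Φf : Matrix (Fin n) (Fin m) ℝ) (Φg : Matrix (Fin n) (Fin m') ℝ)
    (Yt : Fin n → ℝ) (θ₀ : Fin m → ℝ) (φ₀ : Fin m' → ℝ)
    (lam ν : ℝ) (hlam : 0 < lam) (hν : 0 < ν) :
    let L : (Fin m → ℝ) → (Fin m' → ℝ) → ℝ := fun θ φ =>
      (Φf *ᵥ θ) ⬝ᵥ (Φg *ᵥ φ) - Yt ⬝ᵥ (Φg *ᵥ φ)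
        - (1 / 2) * ((Φg *ᵥ φ) ⬝ᵥ (Φg *ᵥ φ))
        - (ν / 2) * ((φ - φ₀) ⬝ᵥ (φ - φ₀))
        + (lam / 2) * ((θ - θ₀) ⬝ᵥ (θ - θ₀))
    let Lmat : Matrix (Fin n) (Fin n) ℝ :=
      Φg * (Φgᵀ * Φg + ν • (1 : Matrix (Fin m') (Fin m') ℝ))⁻¹ * Φgᵀ
    let θstar : Fin m → ℝ :=
      (Φfᵀ * Lmat * Φf + lam • (1 : Matrix (Fin m) (Fin m) ℝ))⁻¹ *ᵥ
        (Φfᵀ *ᵥ (Lmat *ᵥ Yt)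
          - ν • ((Φfᵀ * Φg * (Φgᵀ * Φg + ν • (1 : Matrix (Fin m') (Fin m') ℝ))⁻¹) *ᵥ φ₀)
          + lam • θ₀)
    let φstar : Fin m' → ℝ :=
      (Φgᵀ * Φg + ν • (1 : Matrix (Fin m') (Fin m') ℝ))⁻¹ *ᵥ
        (Φgᵀ *ᵥ (Φf *ᵥ θstar - Yt) + ν • φ₀)
    ((∀ φ : Fin m' → ℝ, L θstar φ ≤ L θstar φstar) ∧
      (∀ θ : Fin m → ℝ, L θstar φstar ≤ L θ φstar)) ∧
    (∀ (θ' : Fin m → ℝ) (φ' : Fin m' → ℝ),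
      ((∀ φ : Fin m' → ℝ, L θ' φ ≤ L θ' φ') ∧ (∀ θ : Fin m → ℝ, L θ' φ' ≤ L θ φ')) →
        θ' = θstar ∧ φ' = φstar) := by
  have hlam' : lam ≠ 0 := ne_of_gt hlam
  intro L Lmat θstar φstar
  set A : Matrix (Fin m') (Fin m') ℝ := Φgᵀ * Φg + ν • (1 : Matrix (Fin m') (Fin m') ℝ)
    with hA_def
  set B : Matrix (Fin m) (Fin m) ℝ :=
    Φfᵀ * (Φg * A⁻¹ * Φgᵀ) * Φf + lam • (1 : Matrix (Fin m) (Fin m) ℝ) with hB_def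
  set c : Fin m → ℝ :=
    Φfᵀ *ᵥ ((Φg * A⁻¹ * Φgᵀ) *ᵥ Yt) - ν • ((Φfᵀ * Φg * A⁻¹) *ᵥ φ₀) + lam • θ₀ with hc_def
  set w : (Fin m → ℝ) → (Fin m' → ℝ) := fun θ => Φgᵀ *ᵥ (Φf *ᵥ θ - Yt) + ν • φ₀ with hw_def
  set φh : (Fin m → ℝ) → (Fin m' → ℝ) := fun θ => A⁻¹ *ᵥ w θ with hφh_def
  set θh : (Fin m' → ℝ) → (Fin m → ℝ) := fun φ => θ₀ - lam⁻¹ • (Φfᵀ *ᵥ (Φg *ᵥ φ))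
    with hθh_def
  have hθstar : θstar = B⁻¹ *ᵥ c := rfl
  have hφstar : φstar = φh θstar := rfl
  have hL : ∀ θ φ, L θ φ =
      (Φf *ᵥ θ) ⬝ᵥ (Φg *ᵥ φ) - Yt ⬝ᵥ (Φg *ᵥ φ)
        - (1 / 2) * ((Φg *ᵥ φ) ⬝ᵥ (Φg *ᵥ φ))
        - (ν / 2) * ((φ - φ₀) ⬝ᵥ (φ - φ₀))
        + (lam / 2) * ((θ - θ₀) ⬝ᵥ (θ - θ₀)) := fun _ _ => rfl
  clear_value L Lmat θstar φstar A B c w φh θh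
  -- symmetry of A
  have hAsymm : Aᵀ = A := by
    rw [hA_def]
    simp [Matrix.transpose_add, Matrix.transpose_mul, Matrix.transpose_smul]
  -- quadratic form of A
  have hAq : ∀ x, x ⬝ᵥ (A *ᵥ x) = (Φg *ᵥ x) ⬝ᵥ (Φg *ᵥ x) + ν * (x ⬝ᵥ x) := by
    intro x
    rw [hA_def, Matrix.add_mulVec, dotProduct_add, Matrix.smul_mulVec,
      Matrix.one_mulVec, dotProduct_smul, smul_eq_mul, ← Matrix.mulVec_mulVec,
      transp_dot, Matrix.transpose_transpose]
  have hAq_nonneg : ∀ x, 0 ≤ x ⬝ᵥ (A *ᵥ x) := by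
    intro x
    rw [hAq]
    have := dot_self_nonneg (Φg *ᵥ x)
    have := dot_self_nonneg x
    nlinarith
  have hAq_zero : ∀ x, x ⬝ᵥ (A *ᵥ x) = 0 → x = 0 := by
    intro x hx
    rw [hAq] at hx
    have h1 := dot_self_nonneg (Φg *ᵥ x)
    have h2 := dot_self_nonneg x
    have : x ⬝ᵥ x = 0 := by nlinarith
    exact dotProduct_self_eq_zero.mp this
  have hAdet : IsUnit A.det := by
    rw [isUnit_iff_ne_zero]
    intro h
    obtain ⟨v, hv, hAv⟩ := Matrix.exists_mulVec_eq_zero_iff.mpr h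
    exact hv (hAq_zero v (by rw [hAv, dotProduct_zero]))
  have hAinv1 : A * A⁻¹ = 1 := Matrix.mul_nonsing_inv _ hAdet
  -- quadratic form of A⁻¹ is nonneg
  have hAiq_nonneg : ∀ z, 0 ≤ z ⬝ᵥ (A⁻¹ *ᵥ z) := by
    intro z
    have hz : A *ᵥ (A⁻¹ *ᵥ z) = z := by
      rw [Matrix.mulVec_mulVec, hAinv1, Matrix.one_mulVec]
    calc (0:ℝ) ≤ (A⁻¹ *ᵥ z) ⬝ᵥ (A *ᵥ (A⁻¹ *ᵥ z)) := hAq_nonneg _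
      _ = (A⁻¹ *ᵥ z) ⬝ᵥ z := by rw [hz]
      _ = z ⬝ᵥ (A⁻¹ *ᵥ z) := dotProduct_comm _ _
  -- quadratic form of B
  have hBq : ∀ x, x ⬝ᵥ (B *ᵥ x) =
      (Φgᵀ *ᵥ (Φf *ᵥ x)) ⬝ᵥ (A⁻¹ *ᵥ (Φgᵀ *ᵥ (Φf *ᵥ x))) + lam * (x ⬝ᵥ x) := by
    intro x
    rw [hB_def, Matrix.add_mulVec, dotProduct_add, Matrix.smul_mulVec,
      Matrix.one_mulVec, dotProduct_smul, smul_eq_mul]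
    congr 1
    rw [← Matrix.mulVec_mulVec, ← Matrix.mulVec_mulVec, ← Matrix.mulVec_mulVec,
      ← Matrix.mulVec_mulVec, transp_dot, Matrix.transpose_transpose, transp_dot]
  have hBdet : IsUnit B.det := by
    rw [isUnit_iff_ne_zero]
    intro h
    obtain ⟨v, hv, hBv⟩ := Matrix.exists_mulVec_eq_zero_iff.mpr h
    have h0 : v ⬝ᵥ (B *ᵥ v) = 0 := by rw [hBv, dotProduct_zero]
    rw [hBq] at h0
    have h1 := hAiq_nonneg (Φgᵀ *ᵥ (Φf *ᵥ v))
    have h2 := dot_self_nonneg v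
    have : v ⬝ᵥ v = 0 := by nlinarith
    exact hv (dotProduct_self_eq_zero.mp this)
  have hBinv1 : B * B⁻¹ = 1 := Matrix.mul_nonsing_inv _ hBdet
  have hBinv2 : B⁻¹ * B = 1 := Matrix.nonsing_inv_mul _ hBdet
  -- the maximizer identity
  have hAφh : ∀ θ, A *ᵥ φh θ = w θ := by
    intro θ
    rw [hφh_def]
    simp only
    rw [Matrix.mulVec_mulVec, hAinv1, Matrix.one_mulVec]
  have hLφ : ∀ θ φ, L θ φ = (w θ) ⬝ᵥ φ - (1/2) * (φ ⬝ᵥ (A *ᵥ φ))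
      + ((lam/2) * ((θ - θ₀) ⬝ᵥ (θ - θ₀)) - (ν/2) * (φ₀ ⬝ᵥ φ₀)) := by
    intro θ φ
    rw [hL, hw_def]
    simp only
    have e1 : (Φgᵀ *ᵥ (Φf *ᵥ θ - Yt) + ν • φ₀) ⬝ᵥ φ
        = (Φf *ᵥ θ) ⬝ᵥ (Φg *ᵥ φ) - Yt ⬝ᵥ (Φg *ᵥ φ) + ν * (φ₀ ⬝ᵥ φ) := by
      simp only [add_dotProduct, smul_dotProduct, smul_eq_mul,
        Matrix.mulVec_sub, sub_dotProduct, ← transp_dot]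
    rw [e1, hAq]
    have e2 : (φ - φ₀) ⬝ᵥ (φ - φ₀) = φ ⬝ᵥ φ - 2 * (φ₀ ⬝ᵥ φ) + φ₀ ⬝ᵥ φ₀ := by
      have : φ ⬝ᵥ φ₀ = φ₀ ⬝ᵥ φ := dotProduct_comm _ _
      simp only [dotProduct_sub, sub_dotProduct, this]
      ring
    rw [e2, sub_dotProduct]
    ring
  have hLθ : ∀ θ φ, L θ φ = (Φfᵀ *ᵥ (Φg *ᵥ φ)) ⬝ᵥ θ + (lam/2) * ((θ - θ₀) ⬝ᵥ (θ - θ₀))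
      + (-(Yt ⬝ᵥ (Φg *ᵥ φ)) - (1/2) * ((Φg *ᵥ φ) ⬝ᵥ (Φg *ᵥ φ))
        - (ν/2) * ((φ - φ₀) ⬝ᵥ (φ - φ₀))) := by
    intro θ φ
    rw [hL]
    have e1 : (Φfᵀ *ᵥ (Φg *ᵥ φ)) ⬝ᵥ θ = (Φf *ᵥ θ) ⬝ᵥ (Φg *ᵥ φ) := by
      rw [dotProduct_comm, transp_dot, Matrix.transpose_transpose]
    rw [e1]
    ring
  have hdiffφ : ∀ θ φ, L θ (φh θ) - L θ φ
      = (1/2) * ((φh θ - φ) ⬝ᵥ (A *ᵥ (φh θ - φ))) := by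
    intro θ φ
    have h := quad_max A hAsymm (φh θ) φ
    rw [hAφh θ] at h
    rw [hLφ θ (φh θ), hLφ θ φ, hAφh θ]
    linear_combination h
  have hdiffθ : ∀ θ φ, L θ φ - L (θh φ) φ
      = (lam/2) * ((θ - θh φ) ⬝ᵥ (θ - θh φ)) := by
    intro θ φ
    have h := quad_min lam hlam' (Φfᵀ *ᵥ (Φg *ᵥ φ)) θ₀ θ
    rw [hLθ θ φ, hLθ (θh φ) φ, hθh_def]
    simp only
    linear_combination (norm := (field_simp; ring1)) h
  -- the key linear identity
  have hkey : ∀ θ, lam • (θh (φh θ) - θ) = c - B *ᵥ θ := by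
    intro θ
    rw [hθh_def, hφh_def, hw_def, hB_def, hc_def]
    simp only [← Matrix.mulVec_mulVec, Matrix.add_mulVec, Matrix.smul_mulVec,
      Matrix.one_mulVec, Matrix.mulVec_add, Matrix.mulVec_sub, Matrix.mulVec_smul]
    match_scalars <;> (field_simp; try ring)
  have hBθstar : B *ᵥ θstar = c := by
    rw [hθstar, Matrix.mulVec_mulVec, hBinv1, Matrix.one_mulVec]
  have hfix : θh (φh θstar) = θstar := by
    have h := hkey θstar
    rw [hBθstar, sub_self] at h
    exact sub_eq_zero.mp ((smul_eq_zero.mp h).resolve_left hlam')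
  have hθhφstar : θh φstar = θstar := by rw [hφstar]; exact hfix
  constructor
  · constructor
    · intro φ
      have h := hdiffφ θstar φ
      have hq := hAq_nonneg (φh θstar - φ)
      rw [hφstar]
      linarith only [h, hq]
    · intro θ
      have h := hdiffθ θ φstar
      rw [hθhφstar] at h
      have hq := dot_self_nonneg (θ - θstar)
      linarith only [h, mul_nonneg (le_of_lt hlam) hq]
  · rintro θ' φ' ⟨h1, h2⟩
    -- φ' = φh θ'
    have e1 := hdiffφ θ' φ'
    have le1 := h1 (φh θ')
    have hq1 := hAq_nonneg (φh θ' - φ')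
    have hq0 : (φh θ' - φ') ⬝ᵥ (A *ᵥ (φh θ' - φ')) = 0 := by linarith only [e1, le1, hq1]
    have hφ' : φ' = φh θ' := (sub_eq_zero.mp (hAq_zero _ hq0)).symm
    -- θ' = θh φ'
    have e2 := hdiffθ θ' φ'
    have le2 := h2 (θh φ')
    have hq2 := dot_self_nonneg (θ' - θh φ')
    have hls : lam / 2 * ((θ' - θh φ') ⬝ᵥ (θ' - θh φ')) ≤ 0 := by linarith only [e2, le2]
    have hs : (θ' - θh φ') ⬝ᵥ (θ' - θh φ') = 0 := by
      rcases lt_or_eq_of_le hq2 with hpos | heq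
      · exfalso; linarith only [hls, mul_pos hlam hpos]
      · exact heq.symm
    have hθ' : θ' = θh φ' := sub_eq_zero.mp (dotProduct_self_eq_zero.mp hs)
    -- conclude via the key identity
    have hfix' : θh (φh θ') = θ' := by rw [← hφ', ← hθ']
    have h := hkey θ'
    rw [hfix', sub_self, smul_zero] at h
    have hcB : c - B *ᵥ θ' = 0 := h.symm
    have hcB' : c = B *ᵥ θ' := sub_eq_zero.mp hcB
    have hθeq : θ' = θstar := by
      rw [hθstar, hcB', Matrix.mulVec_mulVec, hBinv2, Matrix.one_mulVec]
    refine ⟨hθeq, ?_⟩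
    rw [hφ', hθeq, ← hφstar]
end

section
/- Fix integers n ≥ 1, m ≥ 1, m' ≥ 1, matrices Φ_f ∈ ℝ^{n×m} and Φ_g ∈ ℝ^{n×m'}, reals λ > 0, ν > 0, and a vector k* ∈ ℝᵐ. Define L := Φ_g(Φ_gᵀΦ_g + νI_{m'})⁻¹Φ_gᵀ, B := Φ_fᵀLΦ_f + λIₘ, A := B⁻¹Φ_fᵀL, C := Iₘ − AΦ_f, and ΔC := λν B⁻¹Φ_fᵀΦ_g((Φ_gᵀΦ_g + νI_{m'})⁻¹)²Φ_gᵀΦ_f B⁻¹. Let ε be a square-integrable random vector in ℝⁿ on some probability space with E[ε] = 0 and E[εεᵀ] = λIₙ. Then ΔC is positive semidefinite and sup over f₀ ∈ ℝᵐ with ‖f₀‖ = 1 of E[(k*ᵀ(A(Φ_f f₀ + ε) − f₀))²] equals k*ᵀC k* − k*ᵀΔC k*; in particular this supremum is at most k*ᵀC k*. -/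
open Matrix MeasureTheory

lemma my_integral_sq {Ω : Type*} [MeasureSpace Ω] [IsProbabilityMeasure (volume : Measure Ω)]
    {n : ℕ} (ε : Ω → (Fin n → ℝ)) (lam : ℝ)
    (hint1 : ∀ i, Integrable fun ω => ε ω i)
    (hint2 : ∀ i j, Integrable fun ω => ε ω i * ε ω j)
    (hmean : ∀ i, ∫ ω, ε ω i = 0)
    (hcov : ∀ i j, ∫ ω, ε ω i * ε ω j = lam * (if i = j then 1 else 0))
    (c : ℝ) (w : Fin n → ℝ) :
    ∫ ω, (c + w ⬝ᵥ ε ω) ^ 2 = c ^ 2 + lam * (w ⬝ᵥ w) := by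
  have hI1 : Integrable (fun ω => ∑ i, (2 * c * w i) * ε ω i) :=
    integrable_finset_sum _ (fun i _ => (hint1 i).const_mul _)
  have hI2 : Integrable (fun ω => ∑ i, ∑ j, (w i * w j) * (ε ω i * ε ω j)) :=
    integrable_finset_sum _ (fun i _ =>
      integrable_finset_sum _ (fun j _ => (hint2 i j).const_mul _))
  have hfun : (fun ω => (c + w ⬝ᵥ ε ω) ^ 2) = fun ω =>
      c ^ 2 + ((∑ i, (2 * c * w i) * ε ω i) + ∑ i, ∑ j, (w i * w j) * (ε ω i * ε ω j)) := by
    funext ω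
    have h1 : ∑ i, (2 * c * w i) * ε ω i = 2 * c * (w ⬝ᵥ ε ω) := by
      rw [dotProduct, Finset.mul_sum]
      exact Finset.sum_congr rfl fun i _ => by ring
    have h2 : ∑ i, ∑ j, (w i * w j) * (ε ω i * ε ω j) = (w ⬝ᵥ ε ω) ^ 2 := by
      rw [sq, dotProduct, Finset.sum_mul_sum]
      exact Finset.sum_congr rfl fun i _ => Finset.sum_congr rfl fun j _ => by ring
    rw [h1, h2]; ring
  have hI12 : Integrable (fun ω => (∑ i, (2 * c * w i) * ε ω i) +
      ∑ i, ∑ j, (w i * w j) * (ε ω i * ε ω j)) := hI1.add hI2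
  rw [hfun, integral_add (integrable_const _) hI12, integral_add hI1 hI2,
    integral_finset_sum, integral_finset_sum]
  · have hin : ∀ i : Fin n, ∫ ω, ∑ j, w i * w j * (ε ω i * ε ω j) =
        ∑ j, w i * w j * (lam * if i = j then 1 else 0) := by
      intro i
      rw [integral_finset_sum _ fun j _ => (hint2 i j).const_mul _]
      exact Finset.sum_congr rfl fun j _ => by rw [integral_const_mul, hcov]
    simp only [integral_const_mul, hmean, mul_zero, Finset.sum_const_zero]
    rw [Finset.sum_congr rfl fun i _ => hin i]
    have : ∀ i : Fin n, ∑ j, w i * w j * (lam * (if i = j then 1 else 0)) =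
        lam * (w i * w i) := by
      intro i
      rw [Finset.sum_eq_single i (fun j _ hj => by simp [Ne.symm hj]) (by simp)]
      simp; ring
    rw [Finset.sum_congr rfl fun i _ => this i, ← Finset.mul_sum, dotProduct]
    simp
  · exact fun i _ => integrable_finset_sum _ (fun j _ => (hint2 i j).const_mul _)
  · exact fun i _ => (hint1 i).const_mul _

lemma my_psd_smul {k : Type*} [Fintype k] {c : ℝ} {A : Matrix k k ℝ} (hc : 0 ≤ c)
    (hA : A.PosSemidef) : (c • A).PosSemidef := by
  refine Matrix.PosSemidef.of_dotProduct_mulVec_nonneg ?_ fun x => ?_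
  · have h := hA.1
    unfold Matrix.IsHermitian at *
    rw [conjTranspose_smul, h, star_trivial]
  · rw [smul_mulVec, dotProduct_smul, smul_eq_mul]
    exact mul_nonneg hc (hA.dotProduct_mulVec_nonneg x)

/-- Unconfounded error representation of the quasi-Bayesian dual IV posterior covariance:
`ΔC` is positive semidefinite, and the supremum over unit-norm `f₀` of the expected squared
prediction error `E[(k*ᵀ(A(Φ_f f₀ + ε) − f₀))²]` is attained and equals
`k*ᵀCk* − k*ᵀΔCk*`; in particular it is at most `k*ᵀCk*`. -/
theorem stmt9 (n m m' : ℕ) (hn : 0 < n) (hm : 0 < m) (hm' : 0 < m')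
    (Φf : Matrix (Fin n) (Fin m) ℝ) (Φg : Matrix (Fin n) (Fin m') ℝ)
    (lam ν : ℝ) (hlam : 0 < lam) (hν : 0 < ν) (ks : Fin m → ℝ)
    {Ω : Type*} [MeasureSpace Ω] [IsProbabilityMeasure (volume : Measure Ω)]
    (ε : Ω → (Fin n → ℝ)) (hmeas : Measurable ε)
    (hint1 : ∀ i, Integrable fun ω => ε ω i)
    (hint2 : ∀ i j, Integrable fun ω => ε ω i * ε ω j)
    (hmean : ∀ i, ∫ ω, ε ω i = 0)
    (hcov : ∀ i j, ∫ ω, ε ω i * ε ω j = lam * (if i = j then 1 else 0)) :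
    let L : Matrix (Fin n) (Fin n) ℝ :=
      Φg * (Φgᵀ * Φg + ν • (1 : Matrix (Fin m') (Fin m') ℝ))⁻¹ * Φgᵀ
    let B : Matrix (Fin m) (Fin m) ℝ := Φfᵀ * L * Φf + lam • (1 : Matrix (Fin m) (Fin m) ℝ)
    let A : Matrix (Fin m) (Fin n) ℝ := B⁻¹ * Φfᵀ * L
    let C : Matrix (Fin m) (Fin m) ℝ := (1 : Matrix (Fin m) (Fin m) ℝ) - A * Φf
    let ΔC : Matrix (Fin m) (Fin m) ℝ := (lam * ν) •
      (B⁻¹ * Φfᵀ * Φg * ((Φgᵀ * Φg + ν • (1 : Matrix (Fin m') (Fin m') ℝ))⁻¹ ^ 2)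
        * Φgᵀ * Φf * B⁻¹)
    let S : Set ℝ := {x : ℝ | ∃ f₀ : Fin m → ℝ, f₀ ⬝ᵥ f₀ = 1 ∧
      x = ∫ ω, (ks ⬝ᵥ (A *ᵥ (Φf *ᵥ f₀ + ε ω) - f₀)) ^ 2}
    ΔC.PosSemidef ∧
    IsGreatest S (ks ⬝ᵥ (C *ᵥ ks) - ks ⬝ᵥ (ΔC *ᵥ ks)) ∧
    (∀ x ∈ S, x ≤ ks ⬝ᵥ (C *ᵥ ks)) := by
  intro L B A C ΔC S
  set N : Matrix (Fin m') (Fin m') ℝ := Φgᵀ * Φg + ν • (1 : Matrix (Fin m') (Fin m') ℝ)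
    with hNdef
  have hL : L = Φg * N⁻¹ * Φgᵀ := rfl
  have hBdef : B = Φfᵀ * L * Φf + lam • (1 : Matrix (Fin m) (Fin m) ℝ) := rfl
  have hAdef : A = B⁻¹ * Φfᵀ * L := rfl
  have hCdef : C = 1 - A * Φf := rfl
  have hΔdef : ΔC = (lam * ν) • (B⁻¹ * Φfᵀ * Φg * (N⁻¹ ^ 2) * Φgᵀ * Φf * B⁻¹) := rfl
  have hSdef : ∀ x : ℝ, x ∈ S ↔ ∃ f₀ : Fin m → ℝ, f₀ ⬝ᵥ f₀ = 1 ∧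
      x = ∫ ω, (ks ⬝ᵥ (A *ᵥ (Φf *ᵥ f₀ + ε ω) - f₀)) ^ 2 := fun x => Iff.rfl
  clear_value S ΔC C A B L N
  -- basic positivity facts
  have hNpd : N.PosDef := by
    rw [hNdef]
    refine Matrix.PosDef.posSemidef_add ?_ ?_
    · rw [← conjTranspose_eq_transpose_of_trivial]
      exact posSemidef_conjTranspose_mul_self Φg
    · rw [smul_one_eq_diagonal]
      exact posDef_diagonal_iff.mpr fun _ => hν
  have hNdet : IsUnit N.det := (Matrix.isUnit_iff_isUnit_det N).mp hNpd.isUnit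
  have hNmul : N⁻¹ * N = 1 := Matrix.nonsing_inv_mul N hNdet
  have hNmul' : N * N⁻¹ = 1 := Matrix.mul_nonsing_inv N hNdet
  have hNs : Nᵀ = N := by
    rw [← conjTranspose_eq_transpose_of_trivial]; exact hNpd.isHermitian
  have hNis : N⁻¹ᵀ = N⁻¹ := by rw [Matrix.transpose_nonsing_inv, hNs]
  have hLs : Lᵀ = L := by
    rw [hL, Matrix.transpose_mul, Matrix.transpose_mul, transpose_transpose, hNis,
      Matrix.mul_assoc]
  have hLpsd : L.PosSemidef := by
    have h := (hNpd.inv.posSemidef).mul_mul_conjTranspose_same Φg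
    rw [hL]
    rwa [conjTranspose_eq_transpose_of_trivial] at h
  have hBpd : B.PosDef := by
    have h1 : (Φfᵀ * L * Φf).PosSemidef := by
      have h := hLpsd.conjTranspose_mul_mul_same Φf
      rwa [conjTranspose_eq_transpose_of_trivial] at h
    rw [hBdef]
    refine Matrix.PosDef.posSemidef_add h1 ?_
    rw [smul_one_eq_diagonal]
    exact posDef_diagonal_iff.mpr fun _ => hlam
  have hBdet : IsUnit B.det := (Matrix.isUnit_iff_isUnit_det B).mp hBpd.isUnit
  have hBmul : B⁻¹ * B = 1 := Matrix.nonsing_inv_mul B hBdet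
  have hBmul' : B * B⁻¹ = 1 := Matrix.mul_nonsing_inv B hBdet
  have hBs : Bᵀ = B := by
    rw [← conjTranspose_eq_transpose_of_trivial]; exact hBpd.isHermitian
  have hBis : B⁻¹ᵀ = B⁻¹ := by rw [Matrix.transpose_nonsing_inv, hBs]
  -- algebraic identities
  have hΦLΦ : Φfᵀ * L * Φf = B - lam • (1 : Matrix (Fin m) (Fin m) ℝ) := by
    rw [hBdef, add_sub_cancel_right]
  have hAΦ : A * Φf = 1 - lam • B⁻¹ := by
    have h : A * Φf = B⁻¹ * (Φfᵀ * L * Φf) := by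
      rw [hAdef]; simp only [Matrix.mul_assoc]
    rw [h, hΦLΦ, Matrix.mul_sub, hBmul, Matrix.mul_smul, Matrix.mul_one]
  have hCval : C = lam • B⁻¹ := by
    rw [hCdef, hAΦ, sub_sub_cancel]
  have hCs : Cᵀ = C := by rw [hCval, Matrix.transpose_smul, hBis]
  have hAt : Aᵀ = L * (Φf * B⁻¹) := by
    rw [hAdef, Matrix.transpose_mul, Matrix.transpose_mul, transpose_transpose, hLs, hBis]
  -- L * L identity
  have hLL : L * L = L - ν • (Φg * (N⁻¹ * N⁻¹) * Φgᵀ) := by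
    have h1 : Φgᵀ * Φg = N - ν • (1 : Matrix (Fin m') (Fin m') ℝ) := by
      rw [hNdef, add_sub_cancel_right]
    have h2 : L * L = Φg * (N⁻¹ * (Φgᵀ * Φg) * N⁻¹) * Φgᵀ := by
      rw [hL]; simp only [Matrix.mul_assoc]
    have h3 : N⁻¹ * (N - ν • (1 : Matrix (Fin m') (Fin m') ℝ)) * N⁻¹ =
        N⁻¹ - ν • (N⁻¹ * N⁻¹) := by
      rw [Matrix.mul_sub, hNmul, Matrix.mul_smul, Matrix.mul_one, Matrix.sub_mul,
        Matrix.one_mul, Matrix.smul_mul]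
    rw [h2, h1, h3, Matrix.mul_sub, Matrix.sub_mul, Matrix.mul_smul, Matrix.smul_mul, hL]
  -- key matrix identity
  have hKey : C * Cᵀ + lam • (A * Aᵀ) = C - ΔC := by
    have hAA : A * Aᵀ = B⁻¹ - lam • (B⁻¹ * B⁻¹)
        - ν • (B⁻¹ * Φfᵀ * Φg * (N⁻¹ * N⁻¹) * Φgᵀ * Φf * B⁻¹) := by
      have h1 : A * Aᵀ = B⁻¹ * (Φfᵀ * ((L * L) * (Φf * B⁻¹))) := by
        rw [hAt, hAdef]; simp only [Matrix.mul_assoc]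
      rw [h1, hLL]
      have h2 : B⁻¹ * (Φfᵀ * ((L - ν • (Φg * (N⁻¹ * N⁻¹) * Φgᵀ)) * (Φf * B⁻¹))) =
          B⁻¹ * (Φfᵀ * L * Φf) * B⁻¹
          - ν • (B⁻¹ * Φfᵀ * Φg * (N⁻¹ * N⁻¹) * Φgᵀ * Φf * B⁻¹) := by
        rw [Matrix.sub_mul, Matrix.mul_sub, Matrix.mul_sub, Matrix.smul_mul,
          Matrix.mul_smul, Matrix.mul_smul]
        simp only [Matrix.mul_assoc]
      rw [h2, hΦLΦ, Matrix.mul_sub, Matrix.sub_mul, hBmul, Matrix.one_mul,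
        Matrix.mul_smul, Matrix.smul_mul, Matrix.mul_one]
    have hCC : C * Cᵀ = (lam * lam) • (B⁻¹ * B⁻¹) := by
      rw [hCs, hCval, Matrix.smul_mul, Matrix.mul_smul, smul_smul]
    have hΔ : ΔC = (lam * ν) • (B⁻¹ * Φfᵀ * Φg * (N⁻¹ * N⁻¹) * Φgᵀ * Φf * B⁻¹) := by
      rw [hΔdef, sq]
    rw [hCC, hAA, hΔ, hCval]
    rw [smul_sub, smul_sub, smul_smul, smul_smul]
    abel
  -- quadratic-form consequences
  set u : Fin m → ℝ := C *ᵥ ks with hu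
  set w : Fin n → ℝ := Aᵀ *ᵥ ks with hw
  have hCdot : ∀ y : Fin m → ℝ, ks ⬝ᵥ (C *ᵥ y) = u ⬝ᵥ y := by
    intro y
    rw [dotProduct_mulVec, ← Matrix.mulVec_transpose, hCs, hu]
  have hAdot : ∀ y : Fin n → ℝ, ks ⬝ᵥ (A *ᵥ y) = w ⬝ᵥ y := by
    intro y
    rw [dotProduct_mulVec, ← Matrix.mulVec_transpose, hw]
  have hpoint : ∀ (f₀ : Fin m → ℝ) (ω : Ω),
      ks ⬝ᵥ (A *ᵥ (Φf *ᵥ f₀ + ε ω) - f₀) = -(u ⬝ᵥ f₀) + w ⬝ᵥ ε ω := by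
    intro f₀ ω
    rw [Matrix.mulVec_add, add_sub_right_comm, dotProduct_add, hAdot]
    congr 1
    have h1 : A *ᵥ (Φf *ᵥ f₀) - f₀ = -(C *ᵥ f₀) := by
      rw [Matrix.mulVec_mulVec, ← Matrix.neg_mulVec]
      have : -(C) = A * Φf - 1 := by
        rw [hCdef, neg_sub]
      rw [this, Matrix.sub_mulVec, Matrix.one_mulVec]
    rw [h1, dotProduct_neg, hCdot]
  have hval : ∀ f₀ : Fin m → ℝ,
      (∫ ω, (ks ⬝ᵥ (A *ᵥ (Φf *ᵥ f₀ + ε ω) - f₀)) ^ 2) =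
        (u ⬝ᵥ f₀) ^ 2 + lam * (w ⬝ᵥ w) := by
    intro f₀
    calc (∫ ω, (ks ⬝ᵥ (A *ᵥ (Φf *ᵥ f₀ + ε ω) - f₀)) ^ 2)
        = ∫ ω, (-(u ⬝ᵥ f₀) + w ⬝ᵥ ε ω) ^ 2 := by
          congr 1; funext ω; rw [hpoint]
      _ = (-(u ⬝ᵥ f₀)) ^ 2 + lam * (w ⬝ᵥ w) :=
          my_integral_sq ε lam hint1 hint2 hmean hcov _ w
      _ = (u ⬝ᵥ f₀) ^ 2 + lam * (w ⬝ᵥ w) := by rw [neg_sq]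
  have hTval : ks ⬝ᵥ (C *ᵥ ks) - ks ⬝ᵥ (ΔC *ᵥ ks) = (u ⬝ᵥ u) + lam * (w ⬝ᵥ w) := by
    have h1 : ks ⬝ᵥ ((C - ΔC) *ᵥ ks) = ks ⬝ᵥ ((C * Cᵀ + lam • (A * Aᵀ)) *ᵥ ks) := by
      rw [hKey]
    rw [Matrix.sub_mulVec, dotProduct_sub] at h1
    rw [h1, Matrix.add_mulVec, dotProduct_add]
    congr 1
    · rw [hCs, ← Matrix.mulVec_mulVec, hCdot]
    · rw [Matrix.smul_mulVec, dotProduct_smul, smul_eq_mul,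
        ← Matrix.mulVec_mulVec, hAdot]
  -- positive semidefiniteness of ΔC
  have hΔpsd : ΔC.PosSemidef := by
    have hX : ΔC = (lam * ν) • ((N⁻¹ * Φgᵀ * Φf * B⁻¹)ᵀ * (N⁻¹ * Φgᵀ * Φf * B⁻¹)) := by
      rw [hΔdef, sq]
      congr 1
      simp only [Matrix.transpose_mul, transpose_transpose, hNis, hBis, Matrix.mul_assoc]
    rw [hX]
    refine my_psd_smul (le_of_lt (mul_pos hlam hν)) ?_
    have h := Matrix.posSemidef_conjTranspose_mul_self (N⁻¹ * Φgᵀ * Φf * B⁻¹)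
    rwa [conjTranspose_eq_transpose_of_trivial] at h
  have hΔnn : 0 ≤ ks ⬝ᵥ (ΔC *ᵥ ks) := by
    have h := hΔpsd.dotProduct_mulVec_nonneg ks
    rwa [star_trivial] at h
  -- Cauchy-Schwarz upper bound
  have hub : ∀ x ∈ S, x ≤ ks ⬝ᵥ (C *ᵥ ks) - ks ⬝ᵥ (ΔC *ᵥ ks) := by
    intro x hx
    obtain ⟨f₀, hf₀, rfl⟩ := (hSdef x).mp hx
    rw [hval f₀, hTval]
    refine add_le_add_left ?_ _
    have hcs := Finset.sum_mul_sq_le_sq_mul_sq Finset.univ u f₀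
    have h1 : u ⬝ᵥ f₀ = ∑ i, u i * f₀ i := rfl
    have h2 : (∑ i, u i ^ 2) = u ⬝ᵥ u := by
      rw [dotProduct]; exact Finset.sum_congr rfl fun i _ => (sq (u i) ▸ rfl)
    have h3 : (∑ i, f₀ i ^ 2) = 1 := by
      rw [← hf₀, dotProduct]; exact Finset.sum_congr rfl fun i _ => (sq (f₀ i)).symm ▸ rfl
    calc (u ⬝ᵥ f₀) ^ 2 ≤ (∑ i, u i ^ 2) * ∑ i, f₀ i ^ 2 := by rw [h1]; exact hcs
      _ = u ⬝ᵥ u := by rw [h2, h3, mul_one]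
  -- attainment
  have hmem : (ks ⬝ᵥ (C *ᵥ ks) - ks ⬝ᵥ (ΔC *ᵥ ks)) ∈ S := by
    rw [hSdef]
    rcases eq_or_ne u 0 with hu0 | hu0
    · refine ⟨Pi.single ⟨0, hm⟩ 1, ?_, ?_⟩
      · simp [dotProduct, Pi.single_apply]
      · rw [hval, hTval, hu0]
        simp
    · have hsnn : 0 ≤ u ⬝ᵥ u := by
        rw [dotProduct]
        exact Finset.sum_nonneg fun i _ => mul_self_nonneg _
      have hspos : 0 < u ⬝ᵥ u :=
        lt_of_le_of_ne hsnn (fun h => hu0 (dotProduct_self_eq_zero.mp h.symm))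
      set s : ℝ := u ⬝ᵥ u with hs
      refine ⟨(Real.sqrt s)⁻¹ • u, ?_, ?_⟩
      · rw [smul_dotProduct, dotProduct_smul, smul_eq_mul, smul_eq_mul, ← mul_assoc,
          ← mul_inv, Real.mul_self_sqrt hspos.le, inv_mul_cancel₀ hspos.ne']
      · rw [hval, hTval, dotProduct_smul, smul_eq_mul, mul_pow, inv_pow,
          Real.sq_sqrt hspos.le, ← hs, sq, ← mul_assoc, inv_mul_cancel₀ hspos.ne', one_mul]
  exact ⟨hΔpsd, ⟨hmem, hub⟩, fun x hx => le_trans (hub x hx) (by linarith)⟩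
end

section
/- Fix integers n ≥ 1, m ≥ 1, m' ≥ 1, matrices Φ_f ∈ ℝ^{n×m} and Φ_g ∈ ℝ^{n×m'}, reals λ > 0, ν > 0, and a vector k* ∈ ℝᵐ. Define L := Φ_g(Φ_gᵀΦ_g + νI_{m'})⁻¹Φ_gᵀ, B := Φ_fᵀLΦ_f + λIₘ, A := B⁻¹Φ_fᵀL, C := Iₘ − AΦ_f, and ΔC := λν B⁻¹Φ_fᵀΦ_g((Φ_gᵀΦ_g + νI_{m'})⁻¹)²Φ_gᵀΦ_f B⁻¹. Let f₀ and ε be independent square-integrable random vectors in ℝᵐ and ℝⁿ respectively on some probability space, with f₀ having the standard Gaussian distribution N(0, Iₘ), E[ε] = 0 and E[εεᵀ] = λIₙ. Then E[(k*ᵀ(A(Φ_f f₀ + ε) − f₀))²] = k*ᵀC k* − k*ᵀΔC k*. -/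
open Matrix MeasureTheory ProbabilityTheory Real
open scoped ENNReal NNReal


section
variable {n m m' : ℕ}

lemma key_matrix (Φf : Matrix (Fin n) (Fin m) ℝ) (Φg : Matrix (Fin n) (Fin m') ℝ)
    (lam ν : ℝ) (hlam : 0 < lam) (hν : 0 < ν) :
    ((1 : Matrix (Fin m) (Fin m) ℝ) -
        ((Φfᵀ * (Φg * (Φgᵀ * Φg + ν • 1)⁻¹ * Φgᵀ) * Φf + lam • 1)⁻¹ * Φfᵀ *
          (Φg * (Φgᵀ * Φg + ν • 1)⁻¹ * Φgᵀ)) * Φf) *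
      ((1 : Matrix (Fin m) (Fin m) ℝ) -
        ((Φfᵀ * (Φg * (Φgᵀ * Φg + ν • 1)⁻¹ * Φgᵀ) * Φf + lam • 1)⁻¹ * Φfᵀ *
          (Φg * (Φgᵀ * Φg + ν • 1)⁻¹ * Φgᵀ)) * Φf)ᵀ +
      lam • (((Φfᵀ * (Φg * (Φgᵀ * Φg + ν • 1)⁻¹ * Φgᵀ) * Φf + lam • 1)⁻¹ * Φfᵀ *
          (Φg * (Φgᵀ * Φg + ν • 1)⁻¹ * Φgᵀ)) *
        ((Φfᵀ * (Φg * (Φgᵀ * Φg + ν • 1)⁻¹ * Φgᵀ) * Φf + lam • 1)⁻¹ * Φfᵀ *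
          (Φg * (Φgᵀ * Φg + ν • 1)⁻¹ * Φgᵀ))ᵀ) =
      ((1 : Matrix (Fin m) (Fin m) ℝ) -
        ((Φfᵀ * (Φg * (Φgᵀ * Φg + ν • 1)⁻¹ * Φgᵀ) * Φf + lam • 1)⁻¹ * Φfᵀ *
          (Φg * (Φgᵀ * Φg + ν • 1)⁻¹ * Φgᵀ)) * Φf) -
      (lam * ν) • ((Φfᵀ * (Φg * (Φgᵀ * Φg + ν • 1)⁻¹ * Φgᵀ) * Φf + lam • 1)⁻¹ * Φfᵀ * Φg *
        ((Φgᵀ * Φg + ν • 1)⁻¹ ^ 2) * Φgᵀ * Φf *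
        (Φfᵀ * (Φg * (Φgᵀ * Φg + ν • 1)⁻¹ * Φgᵀ) * Φf + lam • 1)⁻¹) := by
  set M : Matrix (Fin m') (Fin m') ℝ := Φgᵀ * Φg + ν • 1 with hMdef
  set L : Matrix (Fin n) (Fin n) ℝ := Φg * M⁻¹ * Φgᵀ with hLdef
  set B : Matrix (Fin m) (Fin m) ℝ := Φfᵀ * L * Φf + lam • 1 with hBdef
  -- positive definiteness and invertibility
  have hMpd : M.PosDef := by
    have h1 : (Φgᵀ * Φg).PosSemidef := by
      simpa using Matrix.posSemidef_conjTranspose_mul_self Φg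
    have h2 : (ν • (1 : Matrix (Fin m') (Fin m') ℝ)).PosDef := by
      rw [Matrix.smul_one_eq_diagonal]
      exact Matrix.posDef_diagonal_iff.2 fun _ => hν
    exact h2.posSemidef_add h1
  have hMT : Mᵀ = M := by
    simp [hMdef, transpose_add, transpose_mul, transpose_smul]
  have hMiT : M⁻¹ᵀ = M⁻¹ := by rw [Matrix.transpose_nonsing_inv, hMT]
  have hLT : Lᵀ = L := by
    rw [hLdef, transpose_mul, transpose_mul, hMiT, transpose_transpose, ← Matrix.mul_assoc]
  have hLpsd : L.PosSemidef := by
    have := hMpd.inv.posSemidef.mul_mul_conjTranspose_same Φg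
    simpa [hLdef, conjTranspose_eq_transpose_of_trivial] using this
  have hBpd : B.PosDef := by
    have h1 : (Φfᵀ * L * Φf).PosSemidef := by
      have := hLpsd.mul_mul_conjTranspose_same Φfᵀ
      simpa [conjTranspose_eq_transpose_of_trivial] using this
    have h2 : (lam • (1 : Matrix (Fin m) (Fin m) ℝ)).PosDef := by
      rw [Matrix.smul_one_eq_diagonal]
      exact Matrix.posDef_diagonal_iff.2 fun _ => hlam
    exact h2.posSemidef_add h1
  have hBinv : Invertible B := hBpd.isUnit.invertible
  have hBT : Bᵀ = B := by
    rw [hBdef, transpose_add, transpose_smul, transpose_one, transpose_mul, transpose_mul,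
      hLT, transpose_transpose, ← Matrix.mul_assoc]
  have hBiT : B⁻¹ᵀ = B⁻¹ := by rw [Matrix.transpose_nonsing_inv, hBT]
  have hBB : B⁻¹ * B = 1 := Matrix.nonsing_inv_mul B hBpd.det_pos.ne'.isUnit
  have hBBr : B * B⁻¹ = 1 := Matrix.mul_nonsing_inv B hBpd.det_pos.ne'.isUnit
  have hMMr : M * M⁻¹ = 1 := Matrix.mul_nonsing_inv M hMpd.det_pos.ne'.isUnit
  -- C = lam • B⁻¹ (right-assoc form)
  have hBdef' : B = Φfᵀ * (L * Φf) + lam • 1 := by rw [hBdef, Matrix.mul_assoc]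
  have hCs : (1 : Matrix (Fin m) (Fin m) ℝ) - B⁻¹ * (Φfᵀ * (L * Φf)) = lam • B⁻¹ := by
    rw [← hBB, ← Matrix.mul_sub, hBdef', add_sub_cancel_left, Matrix.mul_smul, Matrix.mul_one]
  have hCsT : (1 : Matrix (Fin m) (Fin m) ℝ) - Φfᵀ * (L * (Φf * B⁻¹)) = lam • B⁻¹ := by
    have := congrArg Matrix.transpose hCs
    simpa [transpose_sub, transpose_mul, transpose_smul, hLT, hBiT, Matrix.mul_assoc] using this
  -- L * L identity
  have hL2 : L * L = L - ν • (Φg * (M⁻¹ * (M⁻¹ * Φgᵀ))) := by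
    have hgg : Φgᵀ * Φg = M - ν • (1 : Matrix (Fin m') (Fin m') ℝ) := by
      rw [hMdef, add_sub_cancel_right]
    calc L * L = Φg * (M⁻¹ * ((Φgᵀ * Φg) * (M⁻¹ * Φgᵀ))) := by
          simp only [hLdef, Matrix.mul_assoc]
      _ = Φg * (M⁻¹ * ((M - ν • 1) * (M⁻¹ * Φgᵀ))) := by rw [hgg]
      _ = Φg * (M⁻¹ * (M * (M⁻¹ * Φgᵀ) - ν • (M⁻¹ * Φgᵀ))) := by
          rw [Matrix.sub_mul, Matrix.smul_mul, Matrix.one_mul]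
      _ = Φg * (M⁻¹ * (Φgᵀ - ν • (M⁻¹ * Φgᵀ))) := by
          rw [show M * (M⁻¹ * Φgᵀ) = Φgᵀ by rw [← Matrix.mul_assoc, hMMr, Matrix.one_mul]]
      _ = L - ν • (Φg * (M⁻¹ * (M⁻¹ * Φgᵀ))) := by
          rw [Matrix.mul_sub, Matrix.mul_smul, Matrix.mul_sub, Matrix.mul_smul, hLdef,
            Matrix.mul_assoc]
  -- normalize the goal
  simp only [transpose_mul, transpose_sub, transpose_one, transpose_smul,
    Matrix.transpose_nonsing_inv, hBT, hLT, transpose_transpose, Matrix.mul_assoc, sq]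
  rw [hCs, hCsT]
  rw [show L * (L * (Φf * B⁻¹)) = (L * L) * (Φf * B⁻¹) from (Matrix.mul_assoc _ _ _).symm, hL2,
    Matrix.sub_mul, Matrix.smul_mul]
  have key : lam • B⁻¹ = (lam * lam) • (B⁻¹ * B⁻¹) + lam • (B⁻¹ * (Φfᵀ * (L * (Φf * B⁻¹)))) := by
    calc lam • B⁻¹ = lam • (B⁻¹ * (B * B⁻¹)) := by rw [hBBr, Matrix.mul_one]
      _ = lam • (B⁻¹ * (Φfᵀ * (L * (Φf * B⁻¹)))) + (lam * lam) • (B⁻¹ * B⁻¹) := by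
          rw [hBdef, Matrix.add_mul, Matrix.mul_add, Matrix.smul_mul, Matrix.mul_smul,
            Matrix.one_mul, smul_add, smul_smul]
          simp only [Matrix.mul_assoc]
      _ = (lam * lam) • (B⁻¹ * B⁻¹) + lam • (B⁻¹ * (Φfᵀ * (L * (Φf * B⁻¹)))) := by
          rw [add_comm]
  simp only [Matrix.smul_mul, Matrix.mul_smul, smul_smul, Matrix.mul_sub, Matrix.sub_mul,
    smul_sub, Matrix.mul_assoc]
  rw [key]
  abel

end


lemma pdf01 (x : ℝ) :
    gaussianPDFReal 0 1 x = (√(2*π))⁻¹ * exp (-(1/2) * x^2) := by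
  simp only [gaussianPDFReal, NNReal.coe_one, mul_one, sub_zero]
  congr 1
  ring

lemma sqrt2pi_pos : (0:ℝ) < √(2*π) := Real.sqrt_pos.2 (by positivity)

lemma int_x_exp : Integrable (fun x : ℝ => x * exp (-(1/2) * x^2)) := by
  simpa using integrable_mul_exp_neg_mul_sq (b := (1/2:ℝ)) (by norm_num)

lemma int_x2_exp : Integrable (fun x : ℝ => x^2 * exp (-(1/2) * x^2)) := by
  have := integrable_rpow_mul_exp_neg_mul_sq (b := (1/2:ℝ)) (by norm_num) (s := 2) (by norm_num)
  have h2 : ∀ x : ℝ, x ^ (2:ℝ) = x ^ 2 := fun x => by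
    rw [show (2:ℝ) = ((2:ℕ):ℝ) by norm_num, Real.rpow_natCast]
  simpa [h2] using this

lemma integral_x_exp : ∫ x : ℝ, x * exp (-(1/2) * x^2) = 0 := by
  have h := integral_neg_eq_self (fun x : ℝ => x * exp (-(1/2) * x^2)) volume
  simp only [neg_mul, neg_sq] at h
  have h2 : ∫ x : ℝ, -(x * exp (-(1/2) * x^2)) = ∫ x : ℝ, x * exp (-(1/2) * x^2) := by
    simpa using h
  rw [integral_neg] at h2
  linarith

lemma integral_x2_exp : ∫ x : ℝ, x^2 * exp (-(1/2) * x^2) = √(2*π) := by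
  have habs : ∫ x : ℝ, x^2 * exp (-(1/2) * x^2)
      = ∫ x : ℝ, (fun t : ℝ => t^2 * exp (-(1/2) * t^2)) |x| := by
    congr 1 with x
    simp [sq_abs]
  rw [habs, integral_comp_abs (f := fun t : ℝ => t^2 * exp (-(1/2) * t^2))]
  have h2 : ∀ x : ℝ, x ^ (2:ℝ) = x ^ 2 := fun x => by
    rw [show (2:ℝ) = ((2:ℕ):ℝ) by norm_num, Real.rpow_natCast]
  have hval := integral_rpow_mul_exp_neg_mul_rpow (p := 2) (q := 2) (b := 1/2)
    (by norm_num) (by norm_num) (by norm_num)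
  simp only [h2] at hval
  rw [hval]
  have hG : Real.Gamma ((2 + 1) / 2) = (1/2) * √π := by
    rw [show (2 + 1 : ℝ)/2 = 1/2 + 1 by norm_num,
      Real.Gamma_add_one (by norm_num), Real.Gamma_one_half_eq]
  rw [hG]
  have hb : ((1/2 : ℝ)) ^ (-(2 + 1) / 2 : ℝ) = 2 * √2 := by
    rw [show (1/2:ℝ) = 2⁻¹ by norm_num, ← Real.rpow_neg_one (2:ℝ),
      ← Real.rpow_mul (by norm_num : (0:ℝ) ≤ 2),
      show (-1 : ℝ) * (-(2 + 1) / 2) = 1 + 1/2 by norm_num,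
      Real.rpow_add (by norm_num : (0:ℝ) < 2), Real.rpow_one,
      ← Real.sqrt_eq_rpow]
  rw [hb]
  rw [Real.sqrt_mul (by norm_num)]
  ring

lemma gauss01_wd : gaussianReal 0 1
    = volume.withDensity (fun x => ((gaussianPDFReal 0 1 x).toNNReal : ℝ≥0∞)) := by
  rw [gaussianReal_of_var_ne_zero 0 one_ne_zero]; rfl

lemma integrable_gauss01_iff (g : ℝ → ℝ) :
    Integrable g (gaussianReal 0 1) ↔
      Integrable (fun x => gaussianPDFReal 0 1 x * g x) volume := by
  rw [gauss01_wd, integrable_withDensity_iff_integrable_smul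
    (measurable_gaussianPDFReal 0 1).real_toNNReal]
  constructor <;> intro h <;> refine h.congr (Filter.Eventually.of_forall fun x => ?_) <;>
    simp [NNReal.smul_def, Real.coe_toNNReal _ (gaussianPDFReal_nonneg 0 1 x)]

lemma integral_gauss01 (g : ℝ → ℝ) :
    ∫ x, g x ∂(gaussianReal 0 1) = ∫ x, gaussianPDFReal 0 1 x * g x := by
  rw [gauss01_wd, integral_withDensity_eq_integral_smul
    (measurable_gaussianPDFReal 0 1).real_toNNReal]
  congr 1 with x
  simp [NNReal.smul_def, Real.coe_toNNReal _ (gaussianPDFReal_nonneg 0 1 x)]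

lemma gauss01_integrable_id : Integrable (fun x : ℝ => x) (gaussianReal 0 1) := by
  rw [integrable_gauss01_iff]
  have := int_x_exp.const_mul (√(2*π))⁻¹
  refine this.congr (Filter.Eventually.of_forall fun x => ?_)
  simp only [pdf01]; ring

lemma gauss01_integrable_sq : Integrable (fun x : ℝ => x^2) (gaussianReal 0 1) := by
  rw [integrable_gauss01_iff]
  have := int_x2_exp.const_mul (√(2*π))⁻¹
  refine this.congr (Filter.Eventually.of_forall fun x => ?_)
  simp only [pdf01]; ring

lemma gauss01_mean : ∫ x, x ∂(gaussianReal 0 1) = 0 := by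
  rw [integral_gauss01]
  have h : ∀ x : ℝ, gaussianPDFReal 0 1 x * x = (√(2*π))⁻¹ * (x * exp (-(1/2) * x^2)) := by
    intro x; rw [pdf01]; ring
  simp only [h]
  rw [integral_const_mul, integral_x_exp, mul_zero]

lemma gauss01_var : ∫ x, x^2 ∂(gaussianReal 0 1) = 1 := by
  rw [integral_gauss01]
  have h : ∀ x : ℝ, gaussianPDFReal 0 1 x * x^2 = (√(2*π))⁻¹ * (x^2 * exp (-(1/2) * x^2)) := by
    intro x; rw [pdf01]; ring
  simp only [h]
  rw [integral_const_mul, integral_x2_exp, inv_mul_cancel₀ sqrt2pi_pos.ne']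

section PiMoments
variable {m : ℕ}

noncomputable local instance gaussMS : MeasureSpace ℝ := ⟨gaussianReal 0 1⟩

lemma gaussMS_prob : IsProbabilityMeasure (volume : Measure ℝ) :=
  inferInstanceAs (IsProbabilityMeasure (gaussianReal 0 1))

attribute [local instance] gaussMS_prob

lemma volpi : (volume : Measure (Fin m → ℝ)) = Measure.pi fun _ => gaussianReal 0 1 := rfl

lemma pi_coord_integrable (i : Fin m) :
    Integrable (fun x : Fin m → ℝ => x i) (Measure.pi fun _ => gaussianReal 0 1) := by
  rw [← volpi]
  have h := Integrable.fintype_prod (μ := fun _ => volume) (f := fun k : Fin m => fun t : ℝ =>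
      if k = i then t else 1)
    (fun k => by
      by_cases hk : k = i
      · subst hk; simp only [if_pos rfl]; exact gauss01_integrable_id
      · simp [hk, integrable_const])
  refine h.congr (Filter.Eventually.of_forall fun x => ?_)
  simp [Finset.prod_ite_eq']

lemma pi_coord_integral (i : Fin m) :
    ∫ x : Fin m → ℝ, x i ∂(Measure.pi fun _ => gaussianReal 0 1) = 0 := by
  rw [← volpi]
  have h := integral_fintype_prod_volume_eq_prod (𝕜 := ℝ) (f := fun k t =>
      if k = i then t else 1)
  have h1 : (fun x : Fin m → ℝ => ∏ k, if k = i then x k else 1)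
      = fun x : Fin m → ℝ => x i := by
    funext x; simp [Finset.prod_ite_eq']
  rw [h1] at h
  rw [h, Finset.prod_eq_zero (Finset.mem_univ i)]
  simp; exact (gauss01_mean : ∫ x : ℝ, x ∂volume = 0)

lemma pi_prod_integrable (i j : Fin m) :
    Integrable (fun x : Fin m → ℝ => x i * x j) (Measure.pi fun _ => gaussianReal 0 1) := by
  rw [← volpi]
  rcases eq_or_ne i j with rfl | hij
  · have h := Integrable.fintype_prod (μ := fun _ => volume) (f := fun k : Fin m => fun t : ℝ =>
        if k = i then t^2 else 1)
      (fun k => by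
        by_cases hk : k = i
        · subst hk; simp only [if_pos rfl]; exact gauss01_integrable_sq
        · simp [hk, integrable_const])
    refine h.congr (Filter.Eventually.of_forall fun x => ?_)
    simp [Finset.prod_ite_eq', sq]
  · have h := Integrable.fintype_prod (μ := fun _ => volume) (f := fun k : Fin m => fun t : ℝ =>
        if k = i then t else if k = j then t else 1)
      (fun k => by
        by_cases hk : k = i
        · subst hk; simp only [if_pos rfl]; exact gauss01_integrable_id
        · by_cases hk' : k = j
          · subst hk'; simp only [if_neg hk, if_pos rfl]; exact gauss01_integrable_id
          · simp [hk, hk', integrable_const])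
    refine h.congr (Filter.Eventually.of_forall fun x => ?_)
    show (∏ k, if k = i then x k else if k = j then x k else 1) = x i * x j
    rw [← Finset.mul_prod_erase Finset.univ _ (Finset.mem_univ i)]
    rw [← Finset.mul_prod_erase _ _
      (Finset.mem_erase.2 ⟨Ne.symm hij, Finset.mem_univ j⟩)]
    rw [if_pos rfl, if_neg (Ne.symm hij), if_pos rfl]
    rw [Finset.prod_eq_one fun k hk => by
      simp only [Finset.mem_erase] at hk
      rw [if_neg hk.2.1, if_neg hk.1]]
    ring

lemma pi_prod_integral (i j : Fin m) :
    ∫ x : Fin m → ℝ, x i * x j ∂(Measure.pi fun _ => gaussianReal 0 1)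
      = if i = j then 1 else 0 := by
  rw [← volpi]
  rcases eq_or_ne i j with rfl | hij
  · have h := integral_fintype_prod_volume_eq_prod (𝕜 := ℝ) (f := fun k t =>
        if k = i then t^2 else 1)
    have h1 : (fun x : Fin m → ℝ => ∏ k, if k = i then (x k)^2 else 1)
        = fun x : Fin m → ℝ => x i * x i := by
      funext x; simp [Finset.prod_ite_eq', sq]
    rw [h1] at h
    rw [h, if_pos rfl, Finset.prod_eq_one]
    intro k _
    by_cases hk : k = i
    · simp [hk]; exact (gauss01_var : ∫ x : ℝ, x^2 ∂volume = 1)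
    · simp [hk]
  · have h := integral_fintype_prod_volume_eq_prod (𝕜 := ℝ) (f := fun k t =>
        if k = i then t else if k = j then t else 1)
    have h1 : (fun x : Fin m → ℝ => ∏ k, if k = i then x k else if k = j then x k else 1)
        = fun x : Fin m → ℝ => x i * x j := by
      funext x
      rw [← Finset.mul_prod_erase Finset.univ _ (Finset.mem_univ i)]
      rw [← Finset.mul_prod_erase _ _
        (Finset.mem_erase.2 ⟨Ne.symm hij, Finset.mem_univ j⟩)]
      rw [if_pos rfl, if_neg (Ne.symm hij), if_pos rfl]
      rw [Finset.prod_eq_one fun k hk => by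
        simp only [Finset.mem_erase] at hk
        rw [if_neg hk.2.1, if_neg hk.1]]
      ring
    rw [h1] at h
    rw [h, if_neg hij, Finset.prod_eq_zero (Finset.mem_univ i)]
    simp; exact (gauss01_mean : ∫ x : ℝ, x ∂volume = 0)

end PiMoments


lemma sq_dot_sum {k : ℕ} (c : Fin k → ℝ) (x : Fin k → ℝ) :
    (c ⬝ᵥ x)^2 = ∑ i, ∑ j, (c i * c j) * (x i * x j) := by
  simp only [dotProduct, sq, Finset.sum_mul_sum]
  refine Finset.sum_congr rfl fun i _ => Finset.sum_congr rfl fun j _ => ?_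
  ring

lemma dot_sq_moments {k : ℕ} {Ω : Type*} [MeasureSpace Ω] (Z : Ω → Fin k → ℝ)
    (c : Fin k → ℝ) (hi : ∀ i j, Integrable (fun ω => Z ω i * Z ω j)) :
    Integrable (fun ω => (c ⬝ᵥ Z ω)^2) ∧
    ∫ ω, (c ⬝ᵥ Z ω)^2 = ∑ i, ∑ j, (c i * c j) * ∫ ω, Z ω i * Z ω j := by
  have hfun : (fun ω => (c ⬝ᵥ Z ω)^2)
      = fun ω => ∑ i, ∑ j, (c i * c j) * (Z ω i * Z ω j) := by
    funext ω; exact sq_dot_sum c (Z ω)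
  have hint : ∀ i j : Fin k, Integrable (fun ω => (c i * c j) * (Z ω i * Z ω j)) :=
    fun i j => (hi i j).const_mul _
  constructor
  · rw [hfun]
    exact integrable_finset_sum _ fun i _ => integrable_finset_sum _ fun j _ => hint i j
  · rw [hfun, integral_finset_sum _ fun i _ => integrable_finset_sum _ fun j _ => hint i j]
    refine Finset.sum_congr rfl fun i _ => ?_
    rw [integral_finset_sum _ fun j _ => hint i j]
    exact Finset.sum_congr rfl fun j _ => integral_const_mul _ _

lemma mulVec_dot_self {p q : ℕ} (M : Matrix (Fin p) (Fin q) ℝ) (v : Fin p → ℝ) :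
    (Mᵀ *ᵥ v) ⬝ᵥ (Mᵀ *ᵥ v) = v ⬝ᵥ ((M * Mᵀ) *ᵥ v) := by
  rw [← Matrix.mulVec_mulVec, Matrix.dotProduct_mulVec v M, Matrix.mulVec_transpose]

lemma measurable_dot {k : ℕ} (c : Fin k → ℝ) :
    Measurable (fun v : Fin k → ℝ => c ⬝ᵥ v) := by
  refine Finset.measurable_sum _ fun i _ => ?_
  exact (measurable_pi_apply i).const_mul _

/-- Average-case error representation of the quasi-Bayesian dual IV posterior covariance:
if `f₀ ~ N(0, Iₘ)` (structural coefficients drawn from the standard Gaussian prior) is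
independent of the noise `ε` with `E[ε] = 0` and `E[εεᵀ] = λIₙ`, then
`E[(k*ᵀ(A(Φ_f f₀ + ε) − f₀))²] = k*ᵀCk* − k*ᵀΔCk*`. -/
theorem stmt10 (n m m' : ℕ) (hn : 0 < n) (hm : 0 < m) (hm' : 0 < m')
    (Φf : Matrix (Fin n) (Fin m) ℝ) (Φg : Matrix (Fin n) (Fin m') ℝ)
    (lam ν : ℝ) (hlam : 0 < lam) (hν : 0 < ν) (ks : Fin m → ℝ)
    {Ω : Type*} [MeasureSpace Ω] [IsProbabilityMeasure (volume : Measure Ω)]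
    (f₀ : Ω → (Fin m → ℝ)) (ε : Ω → (Fin n → ℝ))
    (hmeasf : Measurable f₀) (hmeas : Measurable ε)
    (hlaw : Measure.map f₀ volume = Measure.pi fun _ : Fin m => gaussianReal 0 1)
    (hindep : IndepFun f₀ ε)
    (hint1 : ∀ i, Integrable fun ω => ε ω i)
    (hint2 : ∀ i j, Integrable fun ω => ε ω i * ε ω j)
    (hmean : ∀ i, ∫ ω, ε ω i = 0)
    (hcov : ∀ i j, ∫ ω, ε ω i * ε ω j = lam * (if i = j then 1 else 0)) :
    let L : Matrix (Fin n) (Fin n) ℝ :=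
      Φg * (Φgᵀ * Φg + ν • (1 : Matrix (Fin m') (Fin m') ℝ))⁻¹ * Φgᵀ
    let B : Matrix (Fin m) (Fin m) ℝ := Φfᵀ * L * Φf + lam • (1 : Matrix (Fin m) (Fin m) ℝ)
    let A : Matrix (Fin m) (Fin n) ℝ := B⁻¹ * Φfᵀ * L
    let C : Matrix (Fin m) (Fin m) ℝ := (1 : Matrix (Fin m) (Fin m) ℝ) - A * Φf
    let ΔC : Matrix (Fin m) (Fin m) ℝ := (lam * ν) •
      (B⁻¹ * Φfᵀ * Φg * ((Φgᵀ * Φg + ν • (1 : Matrix (Fin m') (Fin m') ℝ))⁻¹ ^ 2)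
        * Φgᵀ * Φf * B⁻¹)
    ∫ ω, (ks ⬝ᵥ (A *ᵥ (Φf *ᵥ f₀ ω + ε ω) - f₀ ω)) ^ 2 =
      ks ⬝ᵥ (C *ᵥ ks) - ks ⬝ᵥ (ΔC *ᵥ ks) := by
  intro L B A C ΔC
  have hkey : C * Cᵀ + lam • (A * Aᵀ) = C - ΔC := key_matrix Φf Φg lam ν hlam hν
  set a : Fin m → ℝ := (A * Φf - 1)ᵀ *ᵥ ks with ha
  set b : Fin n → ℝ := Aᵀ *ᵥ ks with hb
  -- rewrite the integrand
  have hrep : ∀ ω, ks ⬝ᵥ (A *ᵥ (Φf *ᵥ f₀ ω + ε ω) - f₀ ω) = a ⬝ᵥ f₀ ω + b ⬝ᵥ ε ω := by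
    intro ω
    rw [Matrix.mulVec_add, Matrix.mulVec_mulVec]
    have h1 : (A * Φf) *ᵥ f₀ ω + A *ᵥ ε ω - f₀ ω = (A * Φf - 1) *ᵥ f₀ ω + A *ᵥ ε ω := by
      rw [Matrix.sub_mulVec, Matrix.one_mulVec]
      abel
    rw [h1, dotProduct_add, ha, hb, Matrix.mulVec_transpose, Matrix.mulVec_transpose,
      Matrix.dotProduct_mulVec, Matrix.dotProduct_mulVec]
  simp only [hrep]
  -- moments of f₀
  have hmf : ∀ i j : Fin m, AEStronglyMeasurable (fun x : Fin m → ℝ => x i * x j)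
      (Measure.map f₀ volume) := fun i j =>
    ((measurable_pi_apply i).mul (measurable_pi_apply j)).aestronglyMeasurable
  have hmf1 : ∀ i : Fin m, AEStronglyMeasurable (fun x : Fin m → ℝ => x i)
      (Measure.map f₀ volume) := fun i => (measurable_pi_apply i).aestronglyMeasurable
  have hf2int : ∀ i j, Integrable (fun ω => f₀ ω i * f₀ ω j) := by
    intro i j
    have h := integrable_map_measure (hmf i j) hmeasf.aemeasurable
    rw [hlaw] at h
    exact h.mp (pi_prod_integrable i j)
  have hf2val : ∀ i j, ∫ ω, f₀ ω i * f₀ ω j = if i = j then 1 else 0 := by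
    intro i j
    have h := integral_map hmeasf.aemeasurable (hmf i j)
    rw [hlaw] at h
    rw [← h, pi_prod_integral]
  have hf1int : ∀ i, Integrable (fun ω => f₀ ω i) := by
    intro i
    have h := integrable_map_measure (hmf1 i) hmeasf.aemeasurable
    rw [hlaw] at h
    exact h.mp (pi_coord_integrable i)
  have hf1val : ∀ i, ∫ ω, f₀ ω i = 0 := by
    intro i
    have h := integral_map hmeasf.aemeasurable (hmf1 i)
    rw [hlaw] at h
    rw [← h, pi_coord_integral]
  -- square moments
  obtain ⟨hX2int, hX2val⟩ := dot_sq_moments f₀ a hf2int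
  obtain ⟨hY2int, hY2val⟩ := dot_sq_moments ε b hint2
  have hX2val' : ∫ ω, (a ⬝ᵥ f₀ ω)^2 = a ⬝ᵥ a := by
    rw [hX2val]
    simp only [hf2val]
    simp [dotProduct, Finset.mul_sum, mul_ite, mul_one, mul_zero,
      Finset.sum_ite_eq, Finset.mem_univ]
  have hY2val' : ∫ ω, (b ⬝ᵥ ε ω)^2 = lam * (b ⬝ᵥ b) := by
    rw [hY2val]
    simp only [hcov]
    simp only [mul_ite, mul_one, mul_zero, Finset.sum_ite_eq, Finset.mem_univ, if_pos]
    simp only [dotProduct, Finset.mul_sum]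
    refine Finset.sum_congr rfl fun i _ => ?_
    ring
  -- integrability and independence of the linear parts
  have hXint : Integrable (fun ω => a ⬝ᵥ f₀ ω) := by
    refine (integrable_finset_sum Finset.univ
      (fun i _ => (hf1int i).const_mul (a i))).congr ?_
    exact Filter.Eventually.of_forall fun ω => rfl
  have hYint : Integrable (fun ω => b ⬝ᵥ ε ω) := by
    refine (integrable_finset_sum Finset.univ
      (fun i _ => (hint1 i).const_mul (b i))).congr ?_
    exact Filter.Eventually.of_forall fun ω => rfl
  have hXval : ∫ ω, a ⬝ᵥ f₀ ω = 0 := by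
    have : (fun ω => a ⬝ᵥ f₀ ω) = fun ω => ∑ i, a i * f₀ ω i := rfl
    rw [this, integral_finset_sum _ fun i _ => (hf1int i).const_mul (a i)]
    simp [integral_const_mul, hf1val]
  have hYval : ∫ ω, b ⬝ᵥ ε ω = 0 := by
    have : (fun ω => b ⬝ᵥ ε ω) = fun ω => ∑ i, b i * ε ω i := rfl
    rw [this, integral_finset_sum _ fun i _ => (hint1 i).const_mul (b i)]
    simp [integral_const_mul, hmean]
  have hindepXY : IndepFun (fun ω => a ⬝ᵥ f₀ ω) (fun ω => b ⬝ᵥ ε ω) :=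
    hindep.comp (measurable_dot a) (measurable_dot b)
  have hXYint : Integrable (fun ω => (a ⬝ᵥ f₀ ω) * (b ⬝ᵥ ε ω)) :=
    (hindepXY.integrable_mul hXint hYint : Integrable _ _)
  have hXYval : ∫ ω, (a ⬝ᵥ f₀ ω) * (b ⬝ᵥ ε ω) = 0 := by
    have h := hindepXY.integral_mul_eq_mul_integral hXint.aestronglyMeasurable hYint.aestronglyMeasurable
    have h2 : ∫ ω, (a ⬝ᵥ f₀ ω) * (b ⬝ᵥ ε ω)
        = integral volume ((fun ω => a ⬝ᵥ f₀ ω) * fun ω => b ⬝ᵥ ε ω) := rfl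
    rw [h2, h, hXval, hYval, mul_zero]
  -- expand the square and integrate
  have hsplit : ∫ ω, (a ⬝ᵥ f₀ ω + b ⬝ᵥ ε ω)^2
      = (∫ ω, (a ⬝ᵥ f₀ ω)^2) + ((∫ ω, 2 * ((a ⬝ᵥ f₀ ω) * (b ⬝ᵥ ε ω))) + ∫ ω, (b ⬝ᵥ ε ω)^2) := by
    have h1 : (fun ω => (a ⬝ᵥ f₀ ω + b ⬝ᵥ ε ω)^2)
        = fun ω => (a ⬝ᵥ f₀ ω)^2 + (2 * ((a ⬝ᵥ f₀ ω) * (b ⬝ᵥ ε ω)) + (b ⬝ᵥ ε ω)^2) := by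
      funext ω; ring
    have hG2 : Integrable (fun ω => 2 * ((a ⬝ᵥ f₀ ω) * (b ⬝ᵥ ε ω))) := hXYint.const_mul 2
    have hG : Integrable (fun ω => 2 * ((a ⬝ᵥ f₀ ω) * (b ⬝ᵥ ε ω)) + (b ⬝ᵥ ε ω)^2) :=
      hG2.add hY2int
    rw [h1, integral_add hX2int hG, integral_add hG2 hY2int]
  rw [hsplit, hX2val', hY2val', integral_const_mul, hXYval, mul_zero, zero_add]
  -- final matrix algebra
  have ha2 : a ⬝ᵥ a = ks ⬝ᵥ ((C * Cᵀ) *ᵥ ks) := by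
    have hNC : A * Φf - 1 = -C := by rw [show C = 1 - A * Φf from rfl, neg_sub]
    rw [ha, hNC, mulVec_dot_self, Matrix.transpose_neg, Matrix.neg_mul, Matrix.mul_neg, neg_neg]
  have hb2 : b ⬝ᵥ b = ks ⬝ᵥ ((A * Aᵀ) *ᵥ ks) := by
    rw [hb, mulVec_dot_self]
  rw [ha2, hb2]
  calc ks ⬝ᵥ ((C * Cᵀ) *ᵥ ks) + lam * (ks ⬝ᵥ ((A * Aᵀ) *ᵥ ks))
      = ks ⬝ᵥ ((C * Cᵀ + lam • (A * Aᵀ)) *ᵥ ks) := by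
        rw [Matrix.add_mulVec, dotProduct_add, Matrix.smul_mulVec,
          dotProduct_smul, smul_eq_mul]
    _ = ks ⬝ᵥ ((C - ΔC) *ᵥ ks) := by rw [hkey]
    _ = ks ⬝ᵥ (C *ᵥ ks) - ks ⬝ᵥ (ΔC *ᵥ ks) := by
        rw [Matrix.sub_mulVec, dotProduct_sub]
end

section
/- Fix integers n, m, m' ≥ 1, matrices Φ_f ∈ ℝ^{n×m} and Φ_g ∈ ℝ^{n×m'}, vectors Ỹ ∈ ℝⁿ, θ₀ ∈ ℝᵐ, φ₀ ∈ ℝ^{m'}, and reals λ > 0, ν > 0, and let 𝓛 be the objective 𝓛(θ,φ) = θᵀΦ_fᵀΦ_g φ − ỸᵀΦ_g φ − ½ φᵀΦ_gᵀΦ_g φ − (ν/2)‖φ − φ₀‖² + (λ/2)‖θ − θ₀‖², whose partial gradients are ∇_θ𝓛(θ,φ) = Φ_fᵀΦ_g φ + λ(θ − θ₀) and ∇_φ𝓛(θ,φ) = Φ_gᵀΦ_f θ − Φ_gᵀỸ − Φ_gᵀΦ_g φ − ν(φ − φ₀). Then with μ := min{λ, ν}, for all θ, θ' ∈ ℝᵐ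 and φ, φ' ∈ ℝ^{m'}: ⟨θ − θ', ∇_θ𝓛(θ,φ) − ∇_θ𝓛(θ',φ')⟩ − ⟨φ − φ', ∇_φ𝓛(θ,φ) − ∇_φ𝓛(θ',φ')⟩ ≥ μ(‖θ − θ'‖² + ‖φ − φ'‖²). -/
open Matrix

/-- Strong monotonicity of the saddle-point vector field `(∇_θ𝓛, −∇_φ𝓛)` of the
randomized-prior minimax objective, with modulus `μ = min{λ, ν}`. -/
theorem stmt13 (n m m' : ℕ) (hn : 0 < n) (hm : 0 < m) (hm' : 0 < m')
    (Φf : Matrix (Fin n) (Fin m) ℝ) (Φg : Matrix (Fin n) (Fin m') ℝ)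
    (Yt : Fin n → ℝ) (θ₀ : Fin m → ℝ) (φ₀ : Fin m' → ℝ)
    (lam ν : ℝ) (hlam : 0 < lam) (hν : 0 < ν) :
    let gθ : (Fin m → ℝ) → (Fin m' → ℝ) → (Fin m → ℝ) := fun θ φ =>
      (Φfᵀ * Φg) *ᵥ φ + lam • (θ - θ₀)
    let gφ : (Fin m → ℝ) → (Fin m' → ℝ) → (Fin m' → ℝ) := fun θ φ =>
      (Φgᵀ * Φf) *ᵥ θ - Φgᵀ *ᵥ Yt - (Φgᵀ * Φg) *ᵥ φ - ν • (φ - φ₀)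
    ∀ (θ θ' : Fin m → ℝ) (φ φ' : Fin m' → ℝ),
      (θ - θ') ⬝ᵥ (gθ θ φ - gθ θ' φ') - (φ - φ') ⬝ᵥ (gφ θ φ - gφ θ' φ') ≥
        min lam ν * ((θ - θ') ⬝ᵥ (θ - θ') + (φ - φ') ⬝ᵥ (φ - φ')) := by
  intro gθ gφ θ θ' φ φ'
  set a := θ - θ' with ha
  set b := φ - φ' with hb
  have h1 : gθ θ φ - gθ θ' φ' = (Φfᵀ * Φg) *ᵥ b + lam • a := by
    simp only [gθ, hb, ha, mulVec_sub]
    module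
  have h2 : gφ θ φ - gφ θ' φ' = (Φgᵀ * Φf) *ᵥ a - (Φgᵀ * Φg) *ᵥ b - ν • b := by
    simp only [gφ, hb, ha, mulVec_sub]
    module
  rw [h1, h2]
  have dpnn : ∀ (k : ℕ) (v : Fin k → ℝ), 0 ≤ v ⬝ᵥ v := fun k v =>
    Finset.sum_nonneg fun i _ => mul_self_nonneg _
  have hcross : a ⬝ᵥ ((Φfᵀ * Φg) *ᵥ b) = b ⬝ᵥ ((Φgᵀ * Φf) *ᵥ a) := by
    rw [dotProduct_mulVec, dotProduct_mulVec, ← vecMul_vecMul, ← vecMul_vecMul,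
      vecMul_transpose, vecMul_transpose, ← dotProduct_mulVec, ← dotProduct_mulVec,
      dotProduct_comm]
  have hquad : 0 ≤ b ⬝ᵥ ((Φgᵀ * Φg) *ᵥ b) := by
    rw [← mulVec_mulVec, dotProduct_mulVec, vecMul_transpose]
    exact dpnn _ _
  have hsq1 : 0 ≤ a ⬝ᵥ a := dpnn _ a
  have hsq2 : 0 ≤ b ⬝ᵥ b := dpnn _ b
  have hmin1 : min lam ν ≤ lam := min_le_left _ _
  have hmin2 : min lam ν ≤ ν := min_le_right _ _
  simp only [dotProduct_add, dotProduct_sub, dotProduct_smul, smul_eq_mul]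
  rw [hcross]
  nlinarith [mul_le_mul_of_nonneg_right hmin1 hsq1, mul_le_mul_of_nonneg_right hmin2 hsq2]
end

section
/- Fix integers n, m, m' ≥ 1, matrices Φ_f ∈ ℝ^{n×m} and Φ_g ∈ ℝ^{n×m'}, vectors Ỹ ∈ ℝⁿ, θ₀ ∈ ℝᵐ, φ₀ ∈ ℝ^{m'}, and reals λ > 0, ν > 0. For i = 1,…,n let E_i := e_i e_iᵀ (e_i the i-th standard basis vector of ℝⁿ), and define 𝓛_i(θ,φ) := n(θᵀΦ_fᵀE_iΦ_g φ − ỸᵀE_iΦ_g φ − ½ φᵀΦ_gᵀE_iΦ_g φ) − (ν/2)‖φ − φ₀‖² + (λ/2)‖θ − θ₀‖², with partial gradients ∇_θ𝓛_i(θ,φ) = nΦ_fᵀE_iΦ_g φ + λ(θ − θ₀) and ∇_φ𝓛_i(θ,φ) = n(Φ_gᵀE_iΦ_f θ − Φ_gᵀE_iỸ − Φ_gᵀE_iΦ_g φ) − ν(φ − φ₀). Let (θ*, φ*) be the unique saddle point of 𝓛 := (1/n)∑_{i=1}^n 𝓛_i, and set μ := min{λ, ν}. Then for every θ ∈ ℝᵐ,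 φ ∈ ℝ^{m'}, η > 0 and every σ_f, σ_g ≥ 0 with ‖∇_θ𝓛_i(θ,φ)‖ ≤ σ_f and ‖∇_φ𝓛_i(θ,φ)‖ ≤ σ_g for all i ∈ {1,…,n}: (1/n)∑_{i=1}^n [‖θ − η∇_θ𝓛_i(θ,φ) − θ*‖² + ‖φ + η∇_φ𝓛_i(θ,φ) − φ*‖²] ≤ (1 − 2μη)(‖θ − θ*‖² + ‖φ − φ*‖²) + η²(σ_f² + σ_g²). -/
open Matrix

lemma dpsn {k : ℕ} (v : Fin k → ℝ) : 0 ≤ v ⬝ᵥ v :=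
  Finset.sum_nonneg fun i _ => mul_self_nonneg (v i)

lemma dpT {k l : ℕ} (A : Matrix (Fin k) (Fin l) ℝ) (x : Fin l → ℝ) (y : Fin k → ℝ) :
    x ⬝ᵥ (Aᵀ *ᵥ y) = (A *ᵥ x) ⬝ᵥ y := by
  rw [Matrix.dotProduct_mulVec, Matrix.vecMul_transpose]

lemma aux_theta {k : ℕ} (v : Fin k → ℝ) (lam : ℝ) (hlam : 0 < lam)
    (h : ∀ u : Fin k → ℝ, 0 ≤ u ⬝ᵥ v + (lam/2) * (u ⬝ᵥ u)) : v = 0 := by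
  have h2 := h (-(1/lam) • v)
  simp only [smul_dotProduct, dotProduct_smul, smul_eq_mul] at h2
  have e : -(1/lam) * (v ⬝ᵥ v) + lam / 2 * (-(1/lam) * (-(1/lam) * (v ⬝ᵥ v)))
      = -(v ⬝ᵥ v) / (2*lam) := by field_simp; ring
  have h4 : 0 ≤ -(v ⬝ᵥ v) / (2*lam) := by rw [← e]; linarith [h2]
  have h5 := (le_div_iff₀ (by positivity : (0:ℝ) < 2*lam)).mp h4
  exact dotProduct_self_eq_zero.mp (le_antisymm (by linarith) (dpsn v))

lemma aux_phi {k l : ℕ} (B : Matrix (Fin l) (Fin k) ℝ) (v : Fin k → ℝ) (nu : ℝ) (hnu : 0 < nu)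
    (h : ∀ w : Fin k → ℝ, w ⬝ᵥ v - (1/2) * ((B *ᵥ w) ⬝ᵥ (B *ᵥ w)) - (nu/2) * (w ⬝ᵥ w) ≤ 0) :
    v = 0 := by
  by_contra hne
  have hq : 0 < v ⬝ᵥ v :=
    lt_of_le_of_ne (dpsn v) (fun h' => hne (dotProduct_self_eq_zero.mp h'.symm))
  obtain ⟨b, hb⟩ : ∃ b : ℝ, b = (1/2) * ((B *ᵥ v) ⬝ᵥ (B *ᵥ v)) + (nu/2) * (v ⬝ᵥ v) := ⟨_, rfl⟩
  have hbpos : 0 < b := by rw [hb]; nlinarith [dpsn (B *ᵥ v)]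
  obtain ⟨t, ht⟩ : ∃ t : ℝ, t = (v ⬝ᵥ v) / (2*b) := ⟨_, rfl⟩
  have htpos : 0 < t := by rw [ht]; positivity
  have h2 := h (t • v)
  simp only [smul_dotProduct, dotProduct_smul, Matrix.mulVec_smul, smul_eq_mul] at h2
  have e2 : (1/2) * (t * (t * ((B *ᵥ v) ⬝ᵥ (B *ᵥ v)))) + nu/2 * (t * (t * (v ⬝ᵥ v)))
      = t * (t * b) := by rw [hb]; ring
  have key : t * (v ⬝ᵥ v) ≤ t * (t * b) := by linarith [h2]
  have key2 : v ⬝ᵥ v ≤ t * b := le_of_mul_le_mul_left key htpos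
  have e3 : t * b = (v ⬝ᵥ v) / 2 := by rw [ht]; field_simp
  rw [e3] at key2; linarith


set_option maxHeartbeats 1000000 in
/-- One-step expected contraction of stochastic gradient descent–ascent with a uniformly
random data index on the randomized-prior minimax objective `𝓛 = (1/n)∑ᵢ 𝓛ᵢ`: if `(θ*, φ*)`
is a saddle point of `𝓛`, `μ = min{λ, ν}`, and the stochastic gradients at `(θ, φ)` are
bounded by `σ_f, σ_g`, then the averaged squared distance after one step of size `η`
contracts as `(1 − 2μη)(‖θ − θ*‖² + ‖φ − φ*‖²) + η²(σ_f² + σ_g²)`. -/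
theorem stmt14 (n m m' : ℕ) (hn : 0 < n) (hm : 0 < m) (hm' : 0 < m')
    (Φf : Matrix (Fin n) (Fin m) ℝ) (Φg : Matrix (Fin n) (Fin m') ℝ)
    (Yt : Fin n → ℝ) (θ₀ : Fin m → ℝ) (φ₀ : Fin m' → ℝ)
    (lam ν : ℝ) (hlam : 0 < lam) (hν : 0 < ν) :
    let Ei : Fin n → Matrix (Fin n) (Fin n) ℝ := fun i => Matrix.single i i 1
    let Li : Fin n → (Fin m → ℝ) → (Fin m' → ℝ) → ℝ := fun i θ φ =>
      (n : ℝ) * ((Φf *ᵥ θ) ⬝ᵥ (Ei i *ᵥ (Φg *ᵥ φ)) - Yt ⬝ᵥ (Ei i *ᵥ (Φg *ᵥ φ))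
          - (1 / 2) * ((Φg *ᵥ φ) ⬝ᵥ (Ei i *ᵥ (Φg *ᵥ φ))))
        - (ν / 2) * ((φ - φ₀) ⬝ᵥ (φ - φ₀)) + (lam / 2) * ((θ - θ₀) ⬝ᵥ (θ - θ₀))
    let gθi : Fin n → (Fin m → ℝ) → (Fin m' → ℝ) → (Fin m → ℝ) := fun i θ φ =>
      (n : ℝ) • ((Φfᵀ * Ei i * Φg) *ᵥ φ) + lam • (θ - θ₀)
    let gφi : Fin n → (Fin m → ℝ) → (Fin m' → ℝ) → (Fin m' → ℝ) := fun i θ φ =>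
      (n : ℝ) • ((Φgᵀ * Ei i * Φf) *ᵥ θ - (Φgᵀ * Ei i) *ᵥ Yt - (Φgᵀ * Ei i * Φg) *ᵥ φ)
        - ν • (φ - φ₀)
    let Lfull : (Fin m → ℝ) → (Fin m' → ℝ) → ℝ := fun θ φ =>
      (1 / (n : ℝ)) * ∑ i : Fin n, Li i θ φ
    ∀ (θs : Fin m → ℝ) (φs : Fin m' → ℝ),
      ((∀ φ : Fin m' → ℝ, Lfull θs φ ≤ Lfull θs φs) ∧
        (∀ θ : Fin m → ℝ, Lfull θs φs ≤ Lfull θ φs)) →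
      ∀ (θ : Fin m → ℝ) (φ : Fin m' → ℝ) (η : ℝ), 0 < η →
        ∀ σf σg : ℝ, 0 ≤ σf → 0 ≤ σg →
          (∀ i : Fin n, Real.sqrt (gθi i θ φ ⬝ᵥ gθi i θ φ) ≤ σf) →
          (∀ i : Fin n, Real.sqrt (gφi i θ φ ⬝ᵥ gφi i θ φ) ≤ σg) →
          (1 / (n : ℝ)) * ∑ i : Fin n,
              ((θ - η • gθi i θ φ - θs) ⬝ᵥ (θ - η • gθi i θ φ - θs) +
                (φ + η • gφi i θ φ - φs) ⬝ᵥ (φ + η • gφi i θ φ - φs)) ≤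
            (1 - 2 * min lam ν * η) *
              ((θ - θs) ⬝ᵥ (θ - θs) + (φ - φs) ⬝ᵥ (φ - φs)) + η ^ 2 * (σf ^ 2 + σg ^ 2) := by
  intro Ei Li gθi gφi Lfull θs φs hsad θ φ η hη σf σg hσf hσg hbf hbg
  have hn' : (0:ℝ) < n := by exact_mod_cast hn
  have hn0 : (n:ℝ) ≠ 0 := ne_of_gt hn'
  -- unfold the local definitions
  have hLidef : ∀ i θ' φ', Li i θ' φ' =
      (n : ℝ) * ((Φf *ᵥ θ') ⬝ᵥ (Ei i *ᵥ (Φg *ᵥ φ')) - Yt ⬝ᵥ (Ei i *ᵥ (Φg *ᵥ φ'))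
          - (1 / 2) * ((Φg *ᵥ φ') ⬝ᵥ (Ei i *ᵥ (Φg *ᵥ φ'))))
        - (ν / 2) * ((φ' - φ₀) ⬝ᵥ (φ' - φ₀)) + (lam / 2) * ((θ' - θ₀) ⬝ᵥ (θ' - θ₀)) :=
    fun _ _ _ => rfl
  have hgtd : ∀ i θ' φ', gθi i θ' φ' =
      (n : ℝ) • ((Φfᵀ * Ei i * Φg) *ᵥ φ') + lam • (θ' - θ₀) := fun _ _ _ => rfl
  have hgpd : ∀ i θ' φ', gφi i θ' φ' =
      (n : ℝ) • ((Φgᵀ * Ei i * Φf) *ᵥ θ' - (Φgᵀ * Ei i) *ᵥ Yt - (Φgᵀ * Ei i * Φg) *ᵥ φ')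
        - ν • (φ' - φ₀) := fun _ _ _ => rfl
  have hLfd : ∀ θ' φ', Lfull θ' φ' = (1 / (n : ℝ)) * ∑ i : Fin n, Li i θ' φ' := fun _ _ => rfl
  -- sum of the basis quadratic forms
  have hsum : ∀ (x v : Fin n → ℝ), ∑ i : Fin n, x ⬝ᵥ (Ei i *ᵥ v) = x ⬝ᵥ v := by
    intro x v
    have h : ∀ i : Fin n, x ⬝ᵥ (Ei i *ᵥ v) = x i * v i := by
      intro i
      show x ⬝ᵥ ((Matrix.single i i (1:ℝ)) *ᵥ v) = x i * v i
      simp [Matrix.mulVec, dotProduct, Matrix.single, Finset.mul_sum, ite_and]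
    simp only [h]; rfl
  -- closed form of Lfull
  have hL : ∀ θ' φ', Lfull θ' φ' =
      (Φf *ᵥ θ') ⬝ᵥ (Φg *ᵥ φ') - Yt ⬝ᵥ (Φg *ᵥ φ')
        - (1/2) * ((Φg *ᵥ φ') ⬝ᵥ (Φg *ᵥ φ'))
        - (ν/2) * ((φ' - φ₀) ⬝ᵥ (φ' - φ₀)) + (lam/2) * ((θ' - θ₀) ⬝ᵥ (θ' - θ₀)) := by
    intro θ' φ'
    rw [hLfd]
    have e1 : ∑ i : Fin n, Li i θ' φ' =
        (n:ℝ) * ((Φf *ᵥ θ') ⬝ᵥ (Φg *ᵥ φ')) - (n:ℝ) * (Yt ⬝ᵥ (Φg *ᵥ φ'))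
          - ((n:ℝ) * (1/2)) * ((Φg *ᵥ φ') ⬝ᵥ (Φg *ᵥ φ'))
          + (n:ℝ) * (-(ν/2) * ((φ' - φ₀) ⬝ᵥ (φ' - φ₀)) + (lam/2) * ((θ' - θ₀) ⬝ᵥ (θ' - θ₀))) := by
      calc ∑ i : Fin n, Li i θ' φ'
          = ∑ i : Fin n, ((n:ℝ) * ((Φf *ᵥ θ') ⬝ᵥ (Ei i *ᵥ (Φg *ᵥ φ')))
              - (n:ℝ) * (Yt ⬝ᵥ (Ei i *ᵥ (Φg *ᵥ φ')))
              - ((n:ℝ) * (1/2)) * ((Φg *ᵥ φ') ⬝ᵥ (Ei i *ᵥ (Φg *ᵥ φ')))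
              + (-(ν/2) * ((φ' - φ₀) ⬝ᵥ (φ' - φ₀)) + (lam/2) * ((θ' - θ₀) ⬝ᵥ (θ' - θ₀)))) := by
            refine Finset.sum_congr rfl fun i _ => ?_
            rw [hLidef]; ring
        _ = _ := by
            rw [Finset.sum_add_distrib, Finset.sum_sub_distrib, Finset.sum_sub_distrib,
              ← Finset.mul_sum, ← Finset.mul_sum, ← Finset.mul_sum, hsum, hsum, hsum,
              Finset.sum_const, Finset.card_univ, Fintype.card_fin, nsmul_eq_mul]
    rw [e1]; field_simp; ring
  obtain ⟨hφside, hθside⟩ := hsad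
  -- gradients at the saddle point
  obtain ⟨Gt, hGt⟩ : ∃ g : Fin m → ℝ, g = Φfᵀ *ᵥ (Φg *ᵥ φs) + lam • (θs - θ₀) := ⟨_, rfl⟩
  obtain ⟨Gp, hGp⟩ : ∃ g : Fin m' → ℝ,
      g = (Φgᵀ *ᵥ (Φf *ᵥ θs) - Φgᵀ *ᵥ Yt - Φgᵀ *ᵥ (Φg *ᵥ φs)) - ν • (φs - φ₀) := ⟨_, rfl⟩
  have hdotGt : ∀ x : Fin m → ℝ,
      x ⬝ᵥ Gt = (Φf *ᵥ x) ⬝ᵥ (Φg *ᵥ φs) + lam * (x ⬝ᵥ (θs - θ₀)) := by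
    intro x
    rw [hGt]
    simp only [dotProduct_add, dotProduct_smul, smul_eq_mul, dpT]
  have hdotGp : ∀ x : Fin m' → ℝ,
      x ⬝ᵥ Gp = (Φg *ᵥ x) ⬝ᵥ (Φf *ᵥ θs) - (Φg *ᵥ x) ⬝ᵥ Yt - (Φg *ᵥ x) ⬝ᵥ (Φg *ᵥ φs)
        - ν * (x ⬝ᵥ (φs - φ₀)) := by
    intro x
    rw [hGp]
    simp only [dotProduct_sub, dotProduct_smul, smul_eq_mul, dpT]
  -- the θ-gradient vanishes at the saddle
  have hGt0 : Gt = 0 := by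
    refine aux_theta Gt lam hlam fun v => ?_
    have h := hθside (θs + v)
    rw [hL, hL] at h
    have E : ((Φf *ᵥ (θs + v)) ⬝ᵥ (Φg *ᵥ φs) - Yt ⬝ᵥ (Φg *ᵥ φs)
          - (1/2) * ((Φg *ᵥ φs) ⬝ᵥ (Φg *ᵥ φs))
          - (ν/2) * ((φs - φ₀) ⬝ᵥ (φs - φ₀)) + (lam/2) * ((θs + v - θ₀) ⬝ᵥ (θs + v - θ₀)))
        - ((Φf *ᵥ θs) ⬝ᵥ (Φg *ᵥ φs) - Yt ⬝ᵥ (Φg *ᵥ φs)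
          - (1/2) * ((Φg *ᵥ φs) ⬝ᵥ (Φg *ᵥ φs))
          - (ν/2) * ((φs - φ₀) ⬝ᵥ (φs - φ₀)) + (lam/2) * ((θs - θ₀) ⬝ᵥ (θs - θ₀)))
        = v ⬝ᵥ Gt + (lam/2) * (v ⬝ᵥ v) := by
      rw [hdotGt v]
      have e2 : θs + v - θ₀ = (θs - θ₀) + v := add_sub_right_comm θs v θ₀
      rw [e2, Matrix.mulVec_add]
      simp only [add_dotProduct, dotProduct_add]
      rw [dotProduct_comm v (θs - θ₀)]
      ring
    linarith [h, E]
  -- the φ-gradient vanishes at the saddle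
  have hGp0 : Gp = 0 := by
    refine aux_phi Φg Gp ν hν fun w => ?_
    have h := hφside (φs + w)
    rw [hL, hL] at h
    have E : ((Φf *ᵥ θs) ⬝ᵥ (Φg *ᵥ (φs + w)) - Yt ⬝ᵥ (Φg *ᵥ (φs + w))
          - (1/2) * ((Φg *ᵥ (φs + w)) ⬝ᵥ (Φg *ᵥ (φs + w)))
          - (ν/2) * ((φs + w - φ₀) ⬝ᵥ (φs + w - φ₀)) + (lam/2) * ((θs - θ₀) ⬝ᵥ (θs - θ₀)))
        - ((Φf *ᵥ θs) ⬝ᵥ (Φg *ᵥ φs) - Yt ⬝ᵥ (Φg *ᵥ φs)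
          - (1/2) * ((Φg *ᵥ φs) ⬝ᵥ (Φg *ᵥ φs))
          - (ν/2) * ((φs - φ₀) ⬝ᵥ (φs - φ₀)) + (lam/2) * ((θs - θ₀) ⬝ᵥ (θs - θ₀)))
        = w ⬝ᵥ Gp - (1/2) * ((Φg *ᵥ w) ⬝ᵥ (Φg *ᵥ w)) - (ν/2) * (w ⬝ᵥ w) := by
      rw [hdotGp w]
      have e2 : φs + w - φ₀ = (φs - φ₀) + w := add_sub_right_comm φs w φ₀
      rw [e2, Matrix.mulVec_add]
      simp only [add_dotProduct, dotProduct_add]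
      rw [dotProduct_comm w (φs - φ₀), dotProduct_comm (Φg *ᵥ w) (Φf *ᵥ θs),
        dotProduct_comm (Φg *ᵥ w) Yt, dotProduct_comm (Φg *ᵥ w) (Φg *ᵥ φs)]
      ring
    linarith [h, E]
  -- abbreviations for the displacements
  obtain ⟨u, hu⟩ : ∃ u : Fin m → ℝ, u = θ - θs := ⟨_, rfl⟩
  obtain ⟨w, hw⟩ : ∃ w : Fin m' → ℝ, w = φ - φs := ⟨_, rfl⟩
  have hθeq : θ = θs + u := by rw [hu]; abel
  have hφeq : φ = φs + w := by rw [hw]; abel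
  -- scalar consequences of vanishing gradients
  have z1 : (Φf *ᵥ u) ⬝ᵥ (Φg *ᵥ φs) + lam * (u ⬝ᵥ (θs - θ₀)) = 0 := by
    rw [← hdotGt u, hGt0, dotProduct_zero]
  have z2 : (Φg *ᵥ w) ⬝ᵥ (Φf *ᵥ θs) - (Φg *ᵥ w) ⬝ᵥ Yt - (Φg *ᵥ w) ⬝ᵥ (Φg *ᵥ φs)
      - ν * (w ⬝ᵥ (φs - φ₀)) = 0 := by
    rw [← hdotGp w, hGp0, dotProduct_zero]
  -- per-index scalar forms of the stochastic gradients
  have hai : ∀ i, u ⬝ᵥ gθi i θ φ =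
      (n:ℝ) * ((Φf *ᵥ u) ⬝ᵥ (Ei i *ᵥ (Φg *ᵥ φ))) + lam * (u ⬝ᵥ (θ - θ₀)) := by
    intro i
    rw [hgtd]
    simp only [dotProduct_add, dotProduct_smul, smul_eq_mul, ← Matrix.mulVec_mulVec, dpT]
  have hbi : ∀ i, w ⬝ᵥ gφi i θ φ =
      (n:ℝ) * ((Φg *ᵥ w) ⬝ᵥ (Ei i *ᵥ (Φf *ᵥ θ)) - (Φg *ᵥ w) ⬝ᵥ (Ei i *ᵥ Yt)
        - (Φg *ᵥ w) ⬝ᵥ (Ei i *ᵥ (Φg *ᵥ φ))) - ν * (w ⬝ᵥ (φ - φ₀)) := by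
    intro i
    rw [hgpd]
    simp only [dotProduct_sub, dotProduct_smul, smul_eq_mul, ← Matrix.mulVec_mulVec, dpT]
  -- sums of the linear terms
  have hsumθ : ∑ i : Fin n, u ⬝ᵥ gθi i θ φ =
      (n:ℝ) * ((Φf *ᵥ u) ⬝ᵥ (Φg *ᵥ φ) + lam * (u ⬝ᵥ (θ - θ₀))) := by
    calc ∑ i : Fin n, u ⬝ᵥ gθi i θ φ
        = ∑ i : Fin n, ((n:ℝ) * ((Φf *ᵥ u) ⬝ᵥ (Ei i *ᵥ (Φg *ᵥ φ))) + lam * (u ⬝ᵥ (θ - θ₀))) :=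
          Finset.sum_congr rfl fun i _ => hai i
      _ = _ := by
          rw [Finset.sum_add_distrib, ← Finset.mul_sum, hsum,
            Finset.sum_const, Finset.card_univ, Fintype.card_fin, nsmul_eq_mul]
          ring
  have hsumφ : ∑ i : Fin n, w ⬝ᵥ gφi i θ φ =
      (n:ℝ) * ((Φg *ᵥ w) ⬝ᵥ (Φf *ᵥ θ) - (Φg *ᵥ w) ⬝ᵥ Yt - (Φg *ᵥ w) ⬝ᵥ (Φg *ᵥ φ)
        - ν * (w ⬝ᵥ (φ - φ₀))) := by
    calc ∑ i : Fin n, w ⬝ᵥ gφi i θ φ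
        = ∑ i : Fin n, ((n:ℝ) * ((Φg *ᵥ w) ⬝ᵥ (Ei i *ᵥ (Φf *ᵥ θ)) - (Φg *ᵥ w) ⬝ᵥ (Ei i *ᵥ Yt)
            - (Φg *ᵥ w) ⬝ᵥ (Ei i *ᵥ (Φg *ᵥ φ))) - ν * (w ⬝ᵥ (φ - φ₀))) :=
          Finset.sum_congr rfl fun i _ => hbi i
      _ = _ := by
          rw [Finset.sum_sub_distrib, ← Finset.mul_sum, Finset.sum_sub_distrib,
            Finset.sum_sub_distrib, hsum, hsum, hsum,
            Finset.sum_const, Finset.card_univ, Fintype.card_fin, nsmul_eq_mul]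
          ring
  -- strong monotonicity of the saddle operator
  have hmono : ((Φf *ᵥ u) ⬝ᵥ (Φg *ᵥ φ) + lam * (u ⬝ᵥ (θ - θ₀)))
      - ((Φg *ᵥ w) ⬝ᵥ (Φf *ᵥ θ) - (Φg *ᵥ w) ⬝ᵥ Yt - (Φg *ᵥ w) ⬝ᵥ (Φg *ᵥ φ)
        - ν * (w ⬝ᵥ (φ - φ₀)))
      = lam * (u ⬝ᵥ u) + ν * (w ⬝ᵥ w) + (Φg *ᵥ w) ⬝ᵥ (Φg *ᵥ w) := by
    have eA : (Φf *ᵥ u) ⬝ᵥ (Φg *ᵥ φ)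
        = (Φf *ᵥ u) ⬝ᵥ (Φg *ᵥ φs) + (Φf *ᵥ u) ⬝ᵥ (Φg *ᵥ w) := by
      rw [hφeq, Matrix.mulVec_add, dotProduct_add]
    have eB : u ⬝ᵥ (θ - θ₀) = u ⬝ᵥ (θs - θ₀) + u ⬝ᵥ u := by
      rw [hθeq, add_sub_right_comm, dotProduct_add]
    have eC : (Φg *ᵥ w) ⬝ᵥ (Φf *ᵥ θ)
        = (Φg *ᵥ w) ⬝ᵥ (Φf *ᵥ θs) + (Φg *ᵥ w) ⬝ᵥ (Φf *ᵥ u) := by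
      rw [hθeq, Matrix.mulVec_add, dotProduct_add]
    have eD : (Φg *ᵥ w) ⬝ᵥ (Φg *ᵥ φ)
        = (Φg *ᵥ w) ⬝ᵥ (Φg *ᵥ φs) + (Φg *ᵥ w) ⬝ᵥ (Φg *ᵥ w) := by
      rw [hφeq, Matrix.mulVec_add, dotProduct_add]
    have eE : w ⬝ᵥ (φ - φ₀) = w ⬝ᵥ (φs - φ₀) + w ⬝ᵥ w := by
      rw [hφeq, add_sub_right_comm, dotProduct_add]
    have ecm : (Φf *ᵥ u) ⬝ᵥ (Φg *ᵥ w) = (Φg *ᵥ w) ⬝ᵥ (Φf *ᵥ u) := dotProduct_comm _ _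
    rw [eA, eB, eC, eD, eE, ecm]
    linear_combination z1 - z2
  -- squared-norm bounds on the stochastic gradients
  have hna : ∀ i, gθi i θ φ ⬝ᵥ gθi i θ φ ≤ σf^2 := by
    intro i
    calc gθi i θ φ ⬝ᵥ gθi i θ φ = (Real.sqrt (gθi i θ φ ⬝ᵥ gθi i θ φ))^2 :=
          (Real.sq_sqrt (dpsn _)).symm
      _ ≤ σf^2 := pow_le_pow_left₀ (Real.sqrt_nonneg _) (hbf i) 2
  have hnb : ∀ i, gφi i θ φ ⬝ᵥ gφi i θ φ ≤ σg^2 := by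
    intro i
    calc gφi i θ φ ⬝ᵥ gφi i θ φ = (Real.sqrt (gφi i θ φ ⬝ᵥ gφi i θ φ))^2 :=
          (Real.sq_sqrt (dpsn _)).symm
      _ ≤ σg^2 := pow_le_pow_left₀ (Real.sqrt_nonneg _) (hbg i) 2
  -- expansion of each summand
  have hexp : ∀ i : Fin n,
      (θ - η • gθi i θ φ - θs) ⬝ᵥ (θ - η • gθi i θ φ - θs) +
        (φ + η • gφi i θ φ - φs) ⬝ᵥ (φ + η • gφi i θ φ - φs)
      = (u ⬝ᵥ u + w ⬝ᵥ w) - 2*η*(u ⬝ᵥ gθi i θ φ) + 2*η*(w ⬝ᵥ gφi i θ φ)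
        + η^2*(gθi i θ φ ⬝ᵥ gθi i θ φ) + η^2*(gφi i θ φ ⬝ᵥ gφi i θ φ) := by
    intro i
    have e1 : θ - η • gθi i θ φ - θs = u - η • gθi i θ φ := by
      rw [hu]; exact sub_right_comm θ (η • gθi i θ φ) θs
    have e2 : φ + η • gφi i θ φ - φs = w + η • gφi i θ φ := by
      rw [hw]; exact add_sub_right_comm φ (η • gφi i θ φ) φs
    rw [e1, e2]
    simp only [sub_dotProduct, dotProduct_sub, add_dotProduct, dotProduct_add,
      smul_dotProduct, dotProduct_smul, smul_eq_mul]
    rw [dotProduct_comm (gθi i θ φ) u, dotProduct_comm (gφi i θ φ) w]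
    ring
  -- total sum
  have hsumbig : ∑ i : Fin n,
      ((θ - η • gθi i θ φ - θs) ⬝ᵥ (θ - η • gθi i θ φ - θs) +
        (φ + η • gφi i θ φ - φs) ⬝ᵥ (φ + η • gφi i θ φ - φs))
      = (n:ℝ)*(u ⬝ᵥ u + w ⬝ᵥ w) - 2*η*(∑ i : Fin n, u ⬝ᵥ gθi i θ φ)
        + 2*η*(∑ i : Fin n, w ⬝ᵥ gφi i θ φ)
        + η^2*(∑ i : Fin n, gθi i θ φ ⬝ᵥ gθi i θ φ)
        + η^2*(∑ i : Fin n, gφi i θ φ ⬝ᵥ gφi i θ φ) := by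
    rw [Finset.sum_congr rfl fun i _ => hexp i]
    rw [Finset.sum_add_distrib, Finset.sum_add_distrib, Finset.sum_add_distrib,
      Finset.sum_sub_distrib, ← Finset.mul_sum, ← Finset.mul_sum, ← Finset.mul_sum,
      ← Finset.mul_sum, Finset.sum_const, Finset.card_univ, Fintype.card_fin, nsmul_eq_mul]
  -- sum bounds
  have hTa : ∑ i : Fin n, gθi i θ φ ⬝ᵥ gθi i θ φ ≤ (n:ℝ) * σf^2 := by
    calc ∑ i : Fin n, gθi i θ φ ⬝ᵥ gθi i θ φ ≤ ∑ _i : Fin n, σf^2 :=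
          Finset.sum_le_sum fun i _ => hna i
      _ = (n:ℝ) * σf^2 := by
          rw [Finset.sum_const, Finset.card_univ, Fintype.card_fin, nsmul_eq_mul]
  have hTb : ∑ i : Fin n, gφi i θ φ ⬝ᵥ gφi i θ φ ≤ (n:ℝ) * σg^2 := by
    calc ∑ i : Fin n, gφi i θ φ ⬝ᵥ gφi i θ φ ≤ ∑ _i : Fin n, σg^2 :=
          Finset.sum_le_sum fun i _ => hnb i
      _ = (n:ℝ) * σg^2 := by
          rw [Finset.sum_const, Finset.card_univ, Fintype.card_fin, nsmul_eq_mul]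
  -- rewrite the goal
  rw [← hu, ← hw, hsumbig, hsumθ, hsumφ]
  -- contraction from strong monotonicity
  have hmin : min lam ν * (u ⬝ᵥ u + w ⬝ᵥ w)
      ≤ ((Φf *ᵥ u) ⬝ᵥ (Φg *ᵥ φ) + lam * (u ⬝ᵥ (θ - θ₀)))
        - ((Φg *ᵥ w) ⬝ᵥ (Φf *ᵥ θ) - (Φg *ᵥ w) ⬝ᵥ Yt - (Φg *ᵥ w) ⬝ᵥ (Φg *ᵥ φ)
          - ν * (w ⬝ᵥ (φ - φ₀))) := by
    rw [hmono]
    have h1 : min lam ν * (u ⬝ᵥ u) ≤ lam * (u ⬝ᵥ u) :=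
      mul_le_mul_of_nonneg_right (min_le_left _ _) (dpsn u)
    have h2 : min lam ν * (w ⬝ᵥ w) ≤ ν * (w ⬝ᵥ w) :=
      mul_le_mul_of_nonneg_right (min_le_right _ _) (dpsn w)
    have h3 : 0 ≤ (Φg *ᵥ w) ⬝ᵥ (Φg *ᵥ w) := dpsn _
    nlinarith [h1, h2, h3]
  have h2η := mul_le_mul_of_nonneg_left hmin (by positivity : (0:ℝ) ≤ 2*η*n)
  have hT : η^2 * (∑ i : Fin n, gθi i θ φ ⬝ᵥ gθi i θ φ)
      + η^2 * (∑ i : Fin n, gφi i θ φ ⬝ᵥ gφi i θ φ) ≤ η^2 * ((n:ℝ) * (σf^2 + σg^2)) := by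
    nlinarith [hTa, hTb, sq_nonneg η]
  -- final arithmetic
  rw [div_mul_eq_mul_div, div_le_iff₀ hn']
  nlinarith [h2η, hT]
end
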